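/- arXiv:2007.03217 — 10 statements merged into one kernel-verified Lean document; each statement's English description precedes it below -/
import Mathlib

section
/- Let G be a finite p-group and let a, b ∈ G have orders p and p^i (i ≥ 1) respectively. If there is a path between a and b in the deleted enhanced power graph (the enhanced power graph with the identity removed), then ⟨a⟩ ⊆ ⟨b⟩. In particular, if both a and b have order p, then ⟨a⟩ = ⟨b⟩. -/
/-- The enhanced power graph of a group `G`: vertices are elements of `G`,
with distinct `u`, `v` adjacent iff both are powers of a common element. -/
def enhancedPowerGraph (G : Type*) [Group G] : SimpleGraph G where
  Adj u v := u ≠ v ∧ ∃ w : G, u ∈ Subgroup.zpowers w ∧ v ∈ Subgroup.zpowers w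
  symm := by
    constructor
    rintro u v ⟨h, w, hu, hv⟩
    exact ⟨h.symm, w, hv, hu⟩
  loopless := by
    constructor
    rintro u ⟨h, -⟩
    exact h rfl

/-- A dominating vertex: adjacent to every other vertex. -/
def IsDominating {V : Type*} (Γ : SimpleGraph V) (v : V) : Prop :=
  ∀ u, u ≠ v → Γ.Adj v u

/-- The vertex connectivity: the least size of a set of vertices whose removal
leaves a graph that is not connected. -/
noncomputable def vertexConnectivity {V : Type*} (Γ : SimpleGraph V) : ℕ :=
  sInf {n | ∃ s : Set V, s.ncard = n ∧ ¬ (Γ.induce sᶜ).Connected}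


open Subgroup

lemma isCyclic_zpowers {G : Type*} [Group G] (g : G) : IsCyclic (zpowers g) := by
  refine ⟨⟨⟨g, mem_zpowers g⟩, fun x => ?_⟩⟩
  obtain ⟨k, hk⟩ := x.2
  exact ⟨k, Subtype.ext (by simpa using hk)⟩

lemma keymem {G : Type*} [Group G] [Finite G] {p : ℕ} (hp : p.Prime) {x y w : G}
    (hx : orderOf x = p) (hy : orderOf y = p) (hxw : x ∈ zpowers w)
    (hyw : y ∈ zpowers w) : x ∈ zpowers y := by
  classical
  have := Fintype.ofFinite G
  haveI : IsCyclic (zpowers w) := _root_.isCyclic_zpowers w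
  set X : zpowers w := ⟨x, hxw⟩
  set Y : zpowers w := ⟨y, hyw⟩
  have hoX : orderOf X = p := by rwa [Subgroup.orderOf_mk]
  have hoY : orderOf Y = p := by rwa [Subgroup.orderOf_mk]
  have hcard := IsCyclic.card_pow_eq_one_le (α := zpowers w) (n := p) hp.pos
  set S : Finset (zpowers w) := Finset.filter (fun b => b ^ p = 1) Finset.univ with hS
  have hsub : ((zpowers Y : Set (zpowers w)).toFinset) ⊆ S := by
    intro z hz
    simp only [Set.mem_toFinset, SetLike.mem_coe] at hz
    simp only [hS, Finset.mem_filter, Finset.mem_univ, true_and]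
    have hd : orderOf z ∣ p := hoY ▸ orderOf_dvd_of_mem_zpowers hz
    exact orderOf_dvd_iff_pow_eq_one.mp hd
  have hYcard : ((zpowers Y : Set (zpowers w)).toFinset).card = p := by
    rw [Set.toFinset_card, ← Nat.card_eq_fintype_card]
    exact hoY ▸ Nat.card_zpowers Y
  have heq : ((zpowers Y : Set (zpowers w)).toFinset) = S :=
    Finset.eq_of_subset_of_card_le hsub (by rw [hYcard]; exact hcard)
  have hXS : X ∈ S := by
    simp only [hS, Finset.mem_filter, Finset.mem_univ, true_and, ← hoX, pow_orderOf_eq_one]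
  rw [← heq] at hXS
  simp only [Set.mem_toFinset, SetLike.mem_coe] at hXS
  obtain ⟨k, hk⟩ := hXS
  exact ⟨k, by simpa using congrArg (Subtype.val) hk⟩

section Main
variable {G : Type*} [Group G] [Finite G] {p : ℕ}

lemma order_sEl (hp : p.Prime) (hpG : IsPGroup p G) {u : G} (hu : u ≠ 1) :
    orderOf (u ^ (orderOf u / p)) = p := by
  haveI := Fact.mk hp
  obtain ⟨m, hm⟩ := IsPGroup.iff_orderOf.mp hpG u
  have hm1 : 1 ≤ m := by
    by_contra h
    push_neg at h
    interval_cases m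
    · simp at hm; exact hu hm
  have hdiv : orderOf u / p = p ^ (m - 1) := by
    obtain ⟨j, rfl⟩ := Nat.exists_eq_add_of_le hm1
    rw [hm, pow_add, pow_one, Nat.mul_div_cancel_left _ hp.pos]
    congr 1
    omega
  have hdvd : p ^ (m - 1) ∣ p ^ m := pow_dvd_pow p (Nat.sub_le m 1)
  rw [hdiv, orderOf_pow, hm, Nat.gcd_eq_right hdvd,
    Nat.pow_div (Nat.sub_le m 1) hp.pos]
  have : m - (m - 1) = 1 := by omega
  rw [this, pow_one]

omit [Finite G] in
lemma sEl_mem (u : G) : u ^ (orderOf u / p) ∈ Subgroup.zpowers u :=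
  Subgroup.pow_mem _ (Subgroup.mem_zpowers u) _

lemma edge_lemma (hp : p.Prime) (hpG : IsPGroup p G) {u v w : G}
    (hu : u ≠ 1) (hv : v ≠ 1) (huw : u ∈ zpowers w) (hvw : v ∈ zpowers w) :
    zpowers (u ^ (orderOf u / p)) = zpowers (v ^ (orderOf v / p)) := by
  have h1 : u ^ (orderOf u / p) ∈ zpowers w := (zpowers_le.mpr huw) (sEl_mem u)
  have h2 : v ^ (orderOf v / p) ∈ zpowers w := (zpowers_le.mpr hvw) (sEl_mem v)
  exact le_antisymm
    (zpowers_le.mpr (keymem hp (order_sEl hp hpG hu) (order_sEl hp hpG hv) h1 h2))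
    (zpowers_le.mpr (keymem hp (order_sEl hp hpG hv) (order_sEl hp hpG hu) h2 h1))

end Main

theorem stmt_1 {p : ℕ} (hp : p.Prime) {G : Type*} [Group G] [Finite G]
    (hpG : IsPGroup p G) (a b : G) (ha : a ≠ 1) (hb : b ≠ 1)
    (hoa : orderOf a = p) {i : ℕ} (hi : 1 ≤ i) (hob : orderOf b = p ^ i)
    (hpath : ((enhancedPowerGraph G).induce {g : G | g ≠ 1}).Reachable
      ⟨a, ha⟩ ⟨b, hb⟩) :
    Subgroup.zpowers a ≤ Subgroup.zpowers b ∧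
      (i = 1 → Subgroup.zpowers a = Subgroup.zpowers b) := by
  have main : ∀ (u v : {g : G // g ≠ 1}),
      ((enhancedPowerGraph G).induce {g : G | g ≠ 1}).Reachable u v →
      zpowers (u.1 ^ (orderOf u.1 / p)) = zpowers (v.1 ^ (orderOf v.1 / p)) := by
    intro u v huv
    obtain ⟨wlk⟩ := huv
    induction wlk with
    | nil => rfl
    | @cons x y z h _ ih =>
      obtain ⟨hne, w, h1, h2⟩ := h
      exact (edge_lemma hp hpG x.2 y.2 h1 h2).trans ih
  have hab := main ⟨a, ha⟩ ⟨b, hb⟩ hpath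
  have hA : a ^ (orderOf a / p) = a := by
    rw [hoa, Nat.div_self hp.pos, pow_one]
  rw [hA] at hab
  constructor
  · rw [hab]
    exact zpowers_le.mpr (sEl_mem b)
  · rintro rfl
    have hB : b ^ (orderOf b / p) = b := by
      rw [hob, pow_one, Nat.div_self hp.pos, pow_one]
    rw [hB] at hab
    exact hab
end

section
/- Let G be a finite non-cyclic group and let v ≠ e be a dominating vertex of the enhanced power graph of G. Then there exists a prime p dividing o(v) such that G has a unique subgroup of order p. -/
/-- The vertex connectivity: the least size of a set of vertices whose removal
leaves a graph that is not connected. -/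
lemma zpowers_isCyclic' {G : Type*} [Group G] (w : G) : IsCyclic (Subgroup.zpowers w) := by
  refine ⟨⟨⟨w, Subgroup.mem_zpowers w⟩, fun x => ?_⟩⟩
  obtain ⟨k, hk⟩ := x.2
  exact ⟨k, Subtype.ext (by push_cast; exact hk)⟩

lemma zpowers_eq_of_orderOf_eq {G : Type*} [Group G] [Finite G] {w a b : G} {p : ℕ}
    (hp : p.Prime) (ha : a ∈ Subgroup.zpowers w) (hb : b ∈ Subgroup.zpowers w)
    (hoa : orderOf a = p) (hob : orderOf b = p) :
    Subgroup.zpowers a = Subgroup.zpowers b := by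
  suffices h : b ∈ Subgroup.zpowers a by
    refine (Subgroup.eq_of_le_of_card_ge (Subgroup.zpowers_le.2 h) ?_).symm
    rw [Nat.card_zpowers, Nat.card_zpowers, hoa, hob]
  classical
  haveI : Fintype (Subgroup.zpowers w) := Fintype.ofFinite _
  haveI : IsCyclic (Subgroup.zpowers w) := zpowers_isCyclic' w
  set a' : Subgroup.zpowers w := ⟨a, ha⟩ with ha'
  set b' : Subgroup.zpowers w := ⟨b, hb⟩ with hb'
  have hoa' : orderOf a' = p := by rw [ha', Subgroup.orderOf_mk, hoa]
  have hob' : orderOf b' = p := by rw [hb', Subgroup.orderOf_mk, hob]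
  let s := (Subgroup.zpowers a' : Set (Subgroup.zpowers w)).toFinset
  let t := Finset.univ.filter (fun x : Subgroup.zpowers w => x ^ p = 1)
  have hsub : s ⊆ t := by
    intro x hx
    rw [Set.mem_toFinset] at hx
    obtain ⟨k, hk⟩ := hx
    simp only [t, Finset.mem_filter, Finset.mem_univ, true_and]
    rw [← hk, ← zpow_natCast, ← zpow_mul, mul_comm, zpow_mul, zpow_natCast,
      ← hoa', pow_orderOf_eq_one, one_zpow]
  have hcard_t : t.card ≤ p := IsCyclic.card_pow_eq_one_le hp.pos
  have hcard_s : s.card = p := by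
    rw [Set.toFinset_card, ← Nat.card_eq_fintype_card]
    simp only [SetLike.coe_sort_coe]
    rw [Nat.card_zpowers, hoa']
  have hst : s = t := Finset.eq_of_subset_of_card_le hsub (hcard_t.trans hcard_s.ge)
  have hbt : b' ∈ t := by
    simp only [t, Finset.mem_filter, Finset.mem_univ, true_and]
    rw [← hob', pow_orderOf_eq_one]
  rw [← hst, Set.mem_toFinset] at hbt
  obtain ⟨k, hk⟩ := hbt
  exact ⟨k, by simpa [ha', hb', Subtype.ext_iff] using hk⟩

theorem stmt_2 {G : Type*} [Group G] [Finite G] (hnc : ¬ IsCyclic G)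
    (v : G) (hv : v ≠ 1) (hdom : IsDominating (enhancedPowerGraph G) v) :
    ∃ p : ℕ, p.Prime ∧ p ∣ orderOf v ∧ ∃! H : Subgroup G, Nat.card H = p := by
  have ho1 : orderOf v ≠ 1 := fun h => hv (orderOf_eq_one_iff.mp h)
  have ho0 : orderOf v ≠ 0 := (orderOf_pos v).ne'
  set p := (orderOf v).minFac with hpdef
  have hp : p.Prime := Nat.minFac_prime ho1
  have hpd : p ∣ orderOf v := Nat.minFac_dvd _
  set b := v ^ (orderOf v / p) with hbdef
  have hob : orderOf b = p := by
    rw [hbdef, orderOf_pow, Nat.gcd_eq_right (Nat.div_dvd_of_dvd hpd),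
      Nat.div_div_self hpd ho0]
  refine ⟨p, hp, hpd, Subgroup.zpowers b, by simp only []; rw [Nat.card_zpowers, hob], ?_⟩
  intro H hH
  rcases H.bot_or_exists_ne_one with rfl | ⟨u, huH, hu1⟩
  · rw [Subgroup.card_bot] at hH
    exact absurd hH.symm hp.ne_one
  · have hou : orderOf u = p := by
      have h1 : orderOf u ∣ p := hH ▸ Subgroup.orderOf_dvd_natCard H huH
      rcases (Nat.dvd_prime hp).1 h1 with h | h
      · exact absurd (orderOf_eq_one_iff.mp h) hu1
      · exact h
    have hHu : H = Subgroup.zpowers u := by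
      refine (Subgroup.eq_of_le_of_card_ge (Subgroup.zpowers_le.2 huH) ?_).symm
      rw [Nat.card_zpowers, hou, hH]
    obtain ⟨w, hvw, huw⟩ : ∃ w, v ∈ Subgroup.zpowers w ∧ u ∈ Subgroup.zpowers w := by
      by_cases h : u = v
      · exact ⟨v, Subgroup.mem_zpowers v, h ▸ Subgroup.mem_zpowers v⟩
      · exact (hdom u h).2
    have hbw : b ∈ Subgroup.zpowers w := Subgroup.pow_mem _ hvw _
    rw [hHu]
    exact zpowers_eq_of_orderOf_eq hp huw hbw hou hob
end

section
/- Let G be a finite non-cyclic abelian group. Then the vertex connectivity of the enhanced power graph of G equals 1 if and only if G is a p-group for some prime p. -/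
open Subgroup

section Aux

variable {G : Type*} [CommGroup G] [Finite G]

/-- If `y` is a nontrivial element of a cyclic group of prime order, it generates it. -/
lemma aux_zpowers_eq_of_prime {z y : G} (hy : y ∈ zpowers z) (hy1 : y ≠ 1)
    (hz : (orderOf z).Prime) : zpowers y = zpowers z := by
  refine Subgroup.eq_of_le_of_card_ge (zpowers_le.2 hy) ?_
  rw [Nat.card_zpowers, Nat.card_zpowers]
  rcases (Nat.Prime.eq_one_or_self_of_dvd hz _ (orderOf_dvd_of_mem_zpowers hy)) with h | h
  · exact absurd (orderOf_eq_one_iff.1 h) hy1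
  · exact h.ge

lemma aux_orderOf_pow_div {p : ℕ} (hp : p.Prime) (w : G) (hdvd : p ∣ orderOf w) :
    orderOf (w ^ (orderOf w / p)) = p := by
  have h0 : orderOf w ≠ 0 := (orderOf_pos w).ne'
  rw [orderOf_pow, Nat.gcd_eq_right (Nat.div_dvd_of_dvd hdvd), Nat.div_div_self hdvd h0]

lemma aux_zpowers_pow_coprime {x : G} {s : ℕ} (h : Nat.Coprime (orderOf x) s) :
    zpowers (x ^ s) = zpowers x := by
  refine Subgroup.eq_of_le_of_card_ge (zpowers_le.2 (pow_mem (mem_zpowers x) s)) ?_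
  rw [Nat.card_zpowers, Nat.card_zpowers, Nat.Coprime.orderOf_pow h]

/-- An element of prime order `p` inside `zpowers w` generates the same subgroup as
`w ^ (orderOf w / p)`. -/
lemma aux_zpowers_eq_min {p : ℕ} (hp : p.Prime) {w y : G} (hyw : y ∈ zpowers w)
    (hy : orderOf y = p) : zpowers y = zpowers (w ^ (orderOf w / p)) := by
  have hdvd : p ∣ orderOf w := hy ▸ orderOf_dvd_of_mem_zpowers hyw
  have hord : orderOf (w ^ (orderOf w / p)) = p := aux_orderOf_pow_div hp w hdvd
  have hy1 : y ≠ 1 := by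
    intro e
    rw [e, orderOf_one] at hy
    exact absurd hy.symm hp.one_lt.ne'
  -- y ∈ zpowers (w ^ (orderOf w / p))
  have hsub : y ∈ zpowers (w ^ (orderOf w / p)) := by
    have hyw' : y ∈ Submonoid.powers w := by
      rw [← SetLike.mem_coe, powers_eq_zpowers w]; exact hyw
    obtain ⟨j, hj0⟩ := hyw'
    have hj : w ^ j = y := hj0
    clear hj0
    obtain ⟨m, hm⟩ := hdvd
    have hm' : orderOf w / p = m := by
      rw [hm, Nat.mul_div_cancel_left _ hp.pos]
    have h1 : w ^ (j * p) = 1 := by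
      rw [pow_mul, hj, ← hy, pow_orderOf_eq_one]
    have h2 : orderOf w ∣ j * p := orderOf_dvd_of_pow_eq_one h1
    have h3 : m ∣ j := by
      rw [hm, mul_comm j p] at h2
      exact (Nat.mul_dvd_mul_iff_left hp.pos).1 h2
    obtain ⟨t, ht⟩ := h3
    rw [hm', ← hj, ht, pow_mul]
    exact pow_mem (mem_zpowers (w ^ m)) t
  exact aux_zpowers_eq_of_prime hsub hy1 (by rw [hord]; exact hp)

lemma aux_p_dvd_orderOf {p : ℕ} (hp : p.Prime) (hG : IsPGroup p G) {u : G} (hu : u ≠ 1) :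
    p ∣ orderOf u := by
  haveI : Fact p.Prime := ⟨hp⟩
  obtain ⟨k, hk⟩ := (IsPGroup.iff_orderOf.1 hG) u
  cases k with
  | zero =>
    rw [pow_zero] at hk
    exact absurd (orderOf_eq_one_iff.1 hk) hu
  | succ k =>
    rw [hk]
    exact dvd_pow_self p k.succ_ne_zero

/-- In a `p`-group, adjacency in the enhanced power graph of two nontrivial elements
forces them to have the same minimal subgroup. -/
lemma aux_invariant {p : ℕ} (hp : p.Prime) (hG : IsPGroup p G) {u v : G} (hu : u ≠ 1)
    (hv : v ≠ 1) (h : (enhancedPowerGraph G).Adj u v) :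
    zpowers (u ^ (orderOf u / p)) = zpowers (v ^ (orderOf v / p)) := by
  obtain ⟨-, w, huw, hvw⟩ := h
  have key : ∀ x : G, x ≠ 1 → x ∈ zpowers w →
      zpowers (x ^ (orderOf x / p)) = zpowers (w ^ (orderOf w / p)) := by
    intro x hx hxw
    have hdvd : p ∣ orderOf x := aux_p_dvd_orderOf hp hG hx
    have hord : orderOf (x ^ (orderOf x / p)) = p := aux_orderOf_pow_div hp x hdvd
    exact aux_zpowers_eq_min hp (pow_mem hxw _) hord
  rw [key u hu huw, key v hv hvw]

lemma aux_walk_invariant {p : ℕ} (hp : p.Prime) (hG : IsPGroup p G)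
    {a b : ({(1 : G)}ᶜ : Set G)}
    (w : ((enhancedPowerGraph G).induce ({(1 : G)}ᶜ : Set G)).Walk a b) :
    zpowers ((a : G) ^ (orderOf (a : G) / p)) = zpowers ((b : G) ^ (orderOf (b : G) / p)) := by
  induction w with
  | nil => rfl
  | @cons x y z h _ ih =>
    have hx : (x : G) ≠ 1 := x.2
    have hy : (y : G) ≠ 1 := y.2
    exact (aux_invariant hp hG hx hy h).trans ih

/-- A non-cyclic abelian `p`-group has two distinct subgroups of order `p`. -/
lemma aux_exists_two {p : ℕ} (hp : p.Prime) (hG : IsPGroup p G) (hnc : ¬ IsCyclic G) :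
    ∃ a b : G, orderOf a = p ∧ orderOf b = p ∧ zpowers a ≠ zpowers b := by
  haveI : Fact p.Prime := ⟨hp⟩
  by_contra hcon
  push_neg at hcon
  apply hnc
  rcases subsingleton_or_nontrivial G with hs | hs
  · infer_instance
  cases nonempty_fintype G
  classical
  -- there is an element of order p
  have hpd : p ∣ Nat.card G := by
    obtain ⟨n, hn⟩ := IsPGroup.iff_card.1 hG
    rcases n with _ | n
    · rw [pow_zero] at hn
      exact absurd hn (Finite.one_lt_card.ne')
    · rw [hn]
      exact dvd_pow_self p n.succ_ne_zero
  obtain ⟨a, ha⟩ := exists_prime_orderOf_dvd_card' p hpd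
  -- all elements killed by p lie in zpowers a
  have hH1 : ∀ x : G, x ^ p = 1 → x ∈ zpowers a := by
    intro x hx
    by_cases hx1 : x = 1
    · rw [hx1]; exact one_mem _
    · have hdx : orderOf x ∣ p := orderOf_dvd_of_pow_eq_one hx
      rcases (hp.eq_one_or_self_of_dvd _ hdx) with h | h
      · exact absurd (orderOf_eq_one_iff.1 h) hx1
      · exact (le_of_eq (hcon x a h ha)) (mem_zpowers x)
  -- the subgroup of elements killed by p ^ k has at most p ^ k elements
  set N : ℕ → Subgroup G := fun k => (powMonoidHom (p ^ k) : G →* G).ker with hN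
  have hNmem : ∀ k (x : G), x ∈ N k ↔ x ^ (p ^ k) = 1 := by
    intro k x
    simp [hN, MonoidHom.mem_ker, powMonoidHom_apply]
  have hkey : ∀ k : ℕ, Nat.card (N k) ≤ p ^ k := by
    intro k
    induction k with
    | zero =>
      have : N 0 = ⊥ := by
        ext x
        simp [hNmem, Subgroup.mem_bot]
      rw [this, pow_zero]
      simp [Subgroup.card_bot]
    | succ k ih =>
      set g : N (k + 1) →* G := (powMonoidHom p).comp (N (k + 1)).subtype with hg
      have hrange : Nat.card g.range ≤ p ^ k := by
        have hle : g.range ≤ N k := by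
          rintro - ⟨x, rfl⟩
          rw [hNmem]
          have hx := (hNmem (k + 1) (x : G)).1 x.2
          have h5 : p * p ^ k = p ^ (k + 1) := (pow_succ' p k).symm
          rw [hg]
          simp only [MonoidHom.comp_apply, Subgroup.coe_subtype, powMonoidHom_apply]
          rw [← pow_mul, h5]
          exact hx
        exact le_trans (Subgroup.card_le_of_le hle) ih
      have hker : Nat.card g.ker ≤ p := by
        have hinj : Function.Injective
            (fun x : g.ker => (⟨((x : N (k + 1)) : G) , by
              have hx : g (x : N (k + 1)) = 1 := MonoidHom.mem_ker.1 x.2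
              have hx' : ((x : N (k + 1)) : G) ^ p = 1 := hx
              exact hH1 _ hx'⟩ : zpowers a)) := by
          intro x y hxy
          simp only [Subtype.mk.injEq] at hxy
          exact Subtype.ext (Subtype.ext hxy)
        calc Nat.card g.ker ≤ Nat.card (zpowers a) := Nat.card_le_card_of_injective _ hinj
          _ = p := by rw [Nat.card_zpowers, ha]
      calc Nat.card (N (k + 1))
          = Nat.card (N (k + 1) ⧸ g.ker) * Nat.card g.ker :=
            Subgroup.card_eq_card_quotient_mul_card_subgroup g.ker
        _ = Nat.card g.range * Nat.card g.ker := by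
            rw [Nat.card_congr (QuotientGroup.quotientKerEquivRange g).toEquiv]
        _ ≤ p ^ k * p := Nat.mul_le_mul hrange hker
        _ = p ^ (k + 1) := (pow_succ p k).symm
  -- conclude cyclic
  apply isCyclic_of_card_pow_eq_one_le
  intro n hn
  set k := (n : ℕ).factorization p with hk
  have htdvd : p ^ k ∣ n := Nat.ordProj_dvd n p
  have hsub : ∀ x : G, x ^ n = 1 → x ^ (p ^ k) = 1 := by
    intro x hx
    obtain ⟨m, hm⟩ := (IsPGroup.iff_orderOf.1 hG) x
    have h1 : orderOf x ∣ n := orderOf_dvd_of_pow_eq_one hx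
    rw [hm] at h1
    have h2 : m ≤ k := (Nat.Prime.pow_dvd_iff_le_factorization hp hn.ne').1 h1
    apply orderOf_dvd_iff_pow_eq_one.1
    rw [hm]
    exact pow_dvd_pow p h2
  have hbound : ∀ s : Finset G, (∀ x ∈ s, x ^ (p ^ k) = 1) → s.card ≤ p ^ k := by
    intro s hs
    have hinj : Function.Injective
        (fun x : s => (⟨x.1, (hNmem k x.1).2 (hs x.1 x.2)⟩ : N k)) := by
      intro x y hxy
      simp only [Subtype.mk.injEq] at hxy
      exact Subtype.ext hxy
    calc s.card = Nat.card s := (Nat.card_eq_finsetCard s).symm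
      _ ≤ Nat.card (N k) := Nat.card_le_card_of_injective _ hinj
      _ ≤ p ^ k := hkey k
  refine le_trans (hbound _ ?_) (Nat.le_of_dvd hn htdvd)
  intro x hx
  have hx' : x ^ n = 1 := by simpa using hx
  exact hsub x hx'

/-- Removing a set not containing `1` leaves the enhanced power graph connected. -/
lemma aux_conn_of_not_mem (s : Set G) (hs : (1 : G) ∉ s) :
    ((enhancedPowerGraph G).induce sᶜ).Connected := by
  have h1 : (1 : G) ∈ sᶜ := hs
  rw [SimpleGraph.connected_iff]
  refine ⟨?_, ⟨⟨1, h1⟩⟩⟩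
  have r : ∀ u : (sᶜ : Set G), ((enhancedPowerGraph G).induce sᶜ).Reachable u ⟨1, h1⟩ := by
    intro u
    by_cases h : (u : G) = 1
    · exact (Subtype.ext h : u = ⟨1, h1⟩) ▸ SimpleGraph.Reachable.refl u
    · exact SimpleGraph.Adj.reachable ⟨h, (u : G), mem_zpowers _, one_mem _⟩
  intro u v
  exact (r u).trans (r v).symm

lemma aux_reach_of_common {s : Set G} (x y : (sᶜ : Set G)) (w : G)
    (hx : (x : G) ∈ zpowers w) (hy : (y : G) ∈ zpowers w) :
    ((enhancedPowerGraph G).induce sᶜ).Reachable x y := by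
  by_cases h : x = y
  · exact h ▸ SimpleGraph.Reachable.refl x
  · exact SimpleGraph.Adj.reachable ⟨fun e => h (Subtype.ext e), w, hx, hy⟩

lemma aux_mem_compl {x : G} (hx : x ≠ 1) : x ∈ ({(1 : G)}ᶜ : Set G) := hx

lemma aux_ne_one_of_prime_orderOf {x : G} (hx : (orderOf x).Prime) : x ≠ 1 := by
  intro e
  rw [e, orderOf_one] at hx
  exact hx.one_lt.ne' rfl

/-- Two elements of distinct prime orders are connected in the graph minus the identity. -/
lemma aux_reach_primes {x y : G} (hx : (orderOf x).Prime) (hy : (orderOf y).Prime)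
    (hne : orderOf x ≠ orderOf y) :
    ((enhancedPowerGraph G).induce ({(1 : G)}ᶜ : Set G)).Reachable
      ⟨x, aux_mem_compl (aux_ne_one_of_prime_orderOf hx)⟩
      ⟨y, aux_mem_compl (aux_ne_one_of_prime_orderOf hy)⟩ := by
  have hco : Nat.Coprime (orderOf x) (orderOf y) := (Nat.coprime_primes hx hy).2 hne
  have hxy : orderOf (x * y) = orderOf x * orderOf y :=
    (Commute.all x y).orderOf_mul_eq_mul_orderOf_of_coprime hco
  have hxy1 : x * y ≠ 1 := by
    intro e
    have h0 : orderOf (x * y) = 1 := by rw [e, orderOf_one]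
    rw [hxy] at h0
    have h1 : 1 < orderOf x * orderOf y := by
      calc 1 < orderOf x := hx.one_lt
        _ ≤ orderOf x * orderOf y := Nat.le_mul_of_pos_right _ hy.pos
    omega
  have hxin : x ∈ zpowers (x * y) := by
    have h1 : (x * y) ^ orderOf y = x ^ orderOf y := by
      rw [mul_pow, pow_orderOf_eq_one, mul_one]
    have h3 : x ^ orderOf y ∈ zpowers (x * y) := h1 ▸ pow_mem (mem_zpowers _) _
    have h2 : zpowers (x ^ orderOf y) = zpowers x := aux_zpowers_pow_coprime hco
    exact (zpowers_le.2 h3) (h2.ge (mem_zpowers x))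
  have hyin : y ∈ zpowers (x * y) := by
    have h1 : (x * y) ^ orderOf x = y ^ orderOf x := by
      rw [mul_pow, pow_orderOf_eq_one, one_mul]
    have h3 : y ^ orderOf x ∈ zpowers (x * y) := h1 ▸ pow_mem (mem_zpowers _) _
    have h2 : zpowers (y ^ orderOf x) = zpowers y := aux_zpowers_pow_coprime hco.symm
    exact (zpowers_le.2 h3) (h2.ge (mem_zpowers y))
  have hmid : (x * y) ∈ ({(1 : G)}ᶜ : Set G) := aux_mem_compl hxy1
  exact (aux_reach_of_common ⟨x, aux_mem_compl (aux_ne_one_of_prime_orderOf hx)⟩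
      ⟨x * y, hmid⟩ (x * y) hxin (mem_zpowers _)).trans
    (aux_reach_of_common ⟨x * y, hmid⟩ ⟨y, aux_mem_compl (aux_ne_one_of_prime_orderOf hy)⟩
      (x * y) (mem_zpowers _) hyin)

/-- If the order of `G` is divisible by two distinct primes, the graph minus the
identity is connected. -/
lemma aux_connected_of_two_primes {p q : ℕ} (hp : p.Prime) (hq : q.Prime) (hpq : p ≠ q)
    (hpd : p ∣ Nat.card G) (hqd : q ∣ Nat.card G) :
    ((enhancedPowerGraph G).induce ({(1 : G)}ᶜ : Set G)).Connected := by
  haveI : Fact p.Prime := ⟨hp⟩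
  haveI : Fact q.Prime := ⟨hq⟩
  obtain ⟨a, ha⟩ := exists_prime_orderOf_dvd_card' p hpd
  obtain ⟨b, hb⟩ := exists_prime_orderOf_dvd_card' q hqd
  have hoa : (orderOf a).Prime := ha ▸ hp
  have hob : (orderOf b).Prime := hb ▸ hq
  have ha1 : a ≠ 1 := aux_ne_one_of_prime_orderOf hoa
  rw [SimpleGraph.connected_iff]
  refine ⟨?_, ⟨⟨a, aux_mem_compl ha1⟩⟩⟩
  have r : ∀ u : (({(1 : G)}ᶜ : Set G) : Set G),
      ((enhancedPowerGraph G).induce ({(1 : G)}ᶜ : Set G)).Reachable u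
        ⟨a, aux_mem_compl ha1⟩ := by
    intro u
    have hu1 : (u : G) ≠ 1 := u.2
    have hord : orderOf (u : G) ≠ 1 := fun e => hu1 (orderOf_eq_one_iff.1 e)
    obtain ⟨r, hr, hrd⟩ := Nat.exists_prime_and_dvd hord
    set u' := (u : G) ^ (orderOf (u : G) / r) with hu'def
    have horu' : orderOf u' = r := aux_orderOf_pow_div hr (u : G) hrd
    have hu'p : (orderOf u').Prime := horu' ▸ hr
    have hu'1 : u' ≠ 1 := aux_ne_one_of_prime_orderOf hu'p
    have step1 : ((enhancedPowerGraph G).induce ({(1 : G)}ᶜ : Set G)).Reachable u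
        ⟨u', aux_mem_compl hu'1⟩ :=
      aux_reach_of_common u ⟨u', aux_mem_compl hu'1⟩ (u : G) (mem_zpowers _)
        (pow_mem (mem_zpowers _) _)
    refine step1.trans ?_
    by_cases hrp : orderOf u' = p
    · have h1 := aux_reach_primes hu'p hob (by rw [hrp, hb]; exact hpq)
      have h2 := aux_reach_primes hob hoa (by rw [ha, hb]; exact fun e => hpq e.symm)
      exact h1.trans h2
    · exact aux_reach_primes hu'p hoa (by rw [ha]; exact hrp)
  intro u v
  exact (r u).trans (r v).symm

end Aux

/-- In a non-cyclic `p`-group the graph minus the identity is disconnected. -/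
lemma aux_not_connected {G : Type*} [CommGroup G] [Finite G] {p : ℕ} (hp : p.Prime)
    (hG : IsPGroup p G) (hnc : ¬ IsCyclic G) :
    ¬ ((enhancedPowerGraph G).induce ({(1 : G)}ᶜ : Set G)).Connected := by
  obtain ⟨a, b, ha, hb, hne⟩ := aux_exists_two hp hG hnc
  have ha1 : a ≠ 1 := aux_ne_one_of_prime_orderOf (ha ▸ hp)
  have hb1 : b ≠ 1 := aux_ne_one_of_prime_orderOf (hb ▸ hp)
  intro hc
  obtain ⟨w⟩ := hc.preconnected ⟨a, aux_mem_compl ha1⟩ ⟨b, aux_mem_compl hb1⟩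
  have hinv := aux_walk_invariant hp hG w
  simp only [ha, hb, Nat.div_self hp.pos, pow_one] at hinv
  exact hne hinv

theorem stmt_5 {G : Type*} [CommGroup G] [Finite G] (hnc : ¬ IsCyclic G) :
    vertexConnectivity (enhancedPowerGraph G) = 1 ↔
      ∃ p : ℕ, p.Prime ∧ IsPGroup p G := by
  have hnt : Nontrivial G := by
    rcases subsingleton_or_nontrivial G with h | h
    · exact absurd (by infer_instance : IsCyclic G) hnc
    · exact h
  set S : Set ℕ :=
    {n | ∃ s : Set G, s.ncard = n ∧ ¬ ((enhancedPowerGraph G).induce sᶜ).Connected} with hS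
  have key : vertexConnectivity (enhancedPowerGraph G) = 1 ↔
      ¬ ((enhancedPowerGraph G).induce (({(1 : G)} : Set G)ᶜ)).Connected := by
    constructor
    · intro h
      have hne : S.Nonempty := by
        by_contra hemp
        rw [Set.not_nonempty_iff_eq_empty] at hemp
        rw [vertexConnectivity, ← hS, hemp, Nat.sInf_empty] at h
        exact one_ne_zero h.symm
      have hmem : 1 ∈ S := by
        have := Nat.sInf_mem hne
        rwa [show sInf S = 1 from h] at this
      obtain ⟨s, hcard, hncon⟩ := hmem
      obtain ⟨x, rfl⟩ := Set.ncard_eq_one.1 hcard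
      by_cases hx : x = 1
      · rwa [hx] at hncon
      · exact absurd (aux_conn_of_not_mem {x} (by simp [Ne.symm hx])) hncon
    · intro h
      have h1 : 1 ∈ S := ⟨{1}, Set.ncard_singleton 1, h⟩
      have h0 : 0 ∉ S := by
        rintro ⟨s, hs0, hncon⟩
        have hse : s = ∅ := (Set.ncard_eq_zero (Set.toFinite s)).1 hs0
        rw [hse] at hncon
        exact hncon (aux_conn_of_not_mem ∅ (Set.notMem_empty 1))
      have hle := Nat.sInf_le h1
      have hne0 : sInf S ≠ 0 := fun e => h0 (e ▸ Nat.sInf_mem ⟨1, h1⟩)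
      rw [vertexConnectivity, ← hS]
      omega
  rw [key]
  constructor
  · intro h
    by_contra hnp
    push_neg at hnp
    have hcard : 1 < Nat.card G := Finite.one_lt_card
    obtain ⟨p, hp, hpd⟩ := Nat.exists_prime_and_dvd (show Nat.card G ≠ 1 by omega)
    have hnotall : ¬ ∀ {q : ℕ}, q.Prime → q ∣ Nat.card G → q = p := by
      intro hall
      have hpow := Nat.eq_prime_pow_of_unique_prime_dvd (by omega : Nat.card G ≠ 0) hall
      exact hnp p hp (IsPGroup.of_card hpow)
    have hq : ∃ q : ℕ, q.Prime ∧ q ∣ Nat.card G ∧ q ≠ p := by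
      by_contra hcon
      push_neg at hcon
      exact hnotall fun {q} hq hqd => hcon q hq hqd
    obtain ⟨q, hq, hqd, hqp⟩ := hq
    exact h (aux_connected_of_two_primes hq hp hqp hqd hpd)
  · rintro ⟨p, hp, hpg⟩
    exact aux_not_connected hp hpg hnc
end

section
/- Let G be a finite abelian group whose order is divisible by at least two distinct primes. Then the enhanced power graph of G with identity removed is connected, and moreover any two vertices are joined by a path of length at most 3. -/
lemma mem_zpowers_mul_of_coprime {G : Type*} [CommGroup G] (u v : G)
    (h : Nat.Coprime (orderOf u) (orderOf v)) : u ∈ Subgroup.zpowers (u * v) := by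
  obtain ⟨k, hk1, hk2⟩ := Nat.chineseRemainder h 1 0
  refine Subgroup.mem_zpowers_iff.mpr ⟨(k : ℤ), ?_⟩
  rw [zpow_natCast, mul_pow]
  have h1 : u ^ k = u ^ 1 := pow_eq_pow_iff_modEq.mpr hk1
  have h2 : v ^ k = v ^ 0 := pow_eq_pow_iff_modEq.mpr hk2
  rw [h1, h2, pow_one, pow_zero, mul_one]

lemma adj_of_coprime {G : Type*} [CommGroup G] (u v : G) (huv : u ≠ v)
    (h : Nat.Coprime (orderOf u) (orderOf v)) : (enhancedPowerGraph G).Adj u v := by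
  refine ⟨huv, u * v, mem_zpowers_mul_of_coprime u v h, ?_⟩
  rw [mul_comm]
  exact mem_zpowers_mul_of_coprime v u h.symm

lemma walk_step {V : Type*} {Γ : SimpleGraph V} {x y : V} (h : x = y ∨ Γ.Adj x y) :
    ∃ w : Γ.Walk x y, w.length ≤ 1 := by
  rcases h with rfl | h
  · exact ⟨SimpleGraph.Walk.nil, by simp⟩
  · exact ⟨SimpleGraph.Walk.cons h SimpleGraph.Walk.nil, by simp⟩

theorem stmt_6 {G : Type*} [CommGroup G] [Finite G]
    (p q : ℕ) (hp : p.Prime) (hq : q.Prime) (hpq : p ≠ q)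
    (hpG : p ∣ Nat.card G) (hqG : q ∣ Nat.card G) :
    ((enhancedPowerGraph G).induce {g : G | g ≠ 1}).Connected ∧
      ∀ a b : {g : G // g ≠ 1},
        ∃ w : ((enhancedPowerGraph G).induce {g : G | g ≠ 1}).Walk a b,
          w.length ≤ 3 := by
  set Γ := (enhancedPowerGraph G).induce {g : G | g ≠ 1} with hΓ
  have cauchy : ∀ r : ℕ, r.Prime → r ∣ Nat.card G → ∃ c : G, orderOf c = r := by
    intro r hr hdvd
    exact @exists_prime_orderOf_dvd_card' G _ _ r ⟨hr⟩ hdvd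
  have ordne : ∀ a : G, a ≠ 1 → orderOf a ≠ 1 := by
    intro a ha h
    exact ha (orderOf_eq_one_iff.mp h)
  have ppelt : ∀ (a : G) (r : ℕ), r.Prime → r ∣ orderOf a →
      ∃ a' : G, orderOf a' = r ∧ a' ∈ Subgroup.zpowers a := by
    intro a r hr hdvd
    refine ⟨a ^ (orderOf a / r), orderOf_pow_orderOf_div (orderOf_pos a).ne' hdvd, ?_⟩
    exact Subgroup.mem_zpowers_iff.mpr ⟨((orderOf a / r : ℕ) : ℤ), by rw [zpow_natCast]⟩
  have key : ∀ a b : {g : G // g ≠ 1}, ∃ w : Γ.Walk a b, w.length ≤ 3 := by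
    intro a b
    by_cases hab : a = b
    · exact ⟨hab ▸ SimpleGraph.Walk.nil, by subst hab; simp⟩
    obtain ⟨r, hr, hra⟩ := Nat.exists_prime_and_dvd (ordne a.1 a.2)
    obtain ⟨s, hs, hsb⟩ := Nat.exists_prime_and_dvd (ordne b.1 b.2)
    by_cases hrs : r = s
    · -- pick t ∈ {p, q} with t ≠ r, unless orders have distinct prime divisors
      by_cases hC : ∃ r' s' : ℕ, r'.Prime ∧ s'.Prime ∧ r' ∣ orderOf a.1 ∧ s' ∣ orderOf b.1 ∧ r' ≠ s'
      · obtain ⟨r', s', hr', hs', hr'a, hs'b, hne⟩ := hC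
        obtain ⟨a', ha'ord, ha'mem⟩ := ppelt a.1 r' hr' hr'a
        obtain ⟨b', hb'ord, hb'mem⟩ := ppelt b.1 s' hs' hs'b
        have ha'1 : a' ≠ 1 := fun h => hr'.ne_one (by rw [← ha'ord, h, orderOf_one])
        have hb'1 : b' ≠ 1 := fun h => hs'.ne_one (by rw [← hb'ord, h, orderOf_one])
        have ha'b' : a' ≠ b' := fun h => hne (by rw [← ha'ord, h, hb'ord])
        set A' : {g : G | g ≠ 1} := ⟨a', ha'1⟩
        set B' : {g : G | g ≠ 1} := ⟨b', hb'1⟩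
        have e2 : Γ.Adj A' B' := by
          refine adj_of_coprime a' b' ha'b' ?_
          rw [ha'ord, hb'ord]
          exact (Nat.coprime_primes hr' hs').mpr hne
        have w1 : ∃ w : Γ.Walk a A', w.length ≤ 1 := by
          refine walk_step ?_
          by_cases h : a.1 = a'
          · exact Or.inl (Subtype.ext h)
          · exact Or.inr ⟨h, a.1, Subgroup.mem_zpowers _, ha'mem⟩
        have w3 : ∃ w : Γ.Walk B' b, w.length ≤ 1 := by
          refine walk_step ?_
          by_cases h : b' = b.1
          · exact Or.inl (Subtype.ext h)
          · exact Or.inr ⟨h, b.1, hb'mem, Subgroup.mem_zpowers _⟩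
        obtain ⟨u1, hu1⟩ := w1
        obtain ⟨u3, hu3⟩ := w3
        refine ⟨u1.append ((SimpleGraph.Walk.cons e2 SimpleGraph.Walk.nil).append u3), ?_⟩
        simp [SimpleGraph.Walk.length_append]
        omega
      · push_neg at hC
        -- every prime dividing orderOf a or orderOf b equals r
        set t : ℕ := if r = p then q else p with ht
        have htprime : t.Prime := by
          rw [ht]; split <;> assumption
        have htr : t ≠ r := by
          rw [ht]; split
          · rename_i h; rw [h]; exact fun hh => hpq hh.symm
          · rename_i h; exact fun hh => h hh.symm
        have htG : t ∣ Nat.card G := by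
          rw [ht]; split <;> assumption
        obtain ⟨c, hc⟩ := cauchy t htprime htG
        have hc1 : c ≠ 1 := fun h => htprime.ne_one (by rw [← hc, h, orderOf_one])
        have hta : ¬ t ∣ orderOf a.1 := by
          intro h
          exact htr ((hC t s htprime hs h hsb).trans hrs.symm)
        have htb : ¬ t ∣ orderOf b.1 := by
          intro h
          exact htr (hC r t hr htprime hra h).symm
        have hac : a.1 ≠ c := by
          intro h
          exact hta (by rw [h, hc])
        have hbc : b.1 ≠ c := by
          intro h
          exact htb (by rw [h, hc])
        set C : {g : G | g ≠ 1} := ⟨c, hc1⟩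
        have e1 : Γ.Adj a C :=
          adj_of_coprime a.1 c hac (by rw [hc]; exact (Nat.coprime_comm.mp
            ((Nat.Prime.coprime_iff_not_dvd htprime).mpr hta)))
        have e2 : Γ.Adj C b :=
          (adj_of_coprime b.1 c hbc (by rw [hc]; exact (Nat.coprime_comm.mp
            ((Nat.Prime.coprime_iff_not_dvd htprime).mpr htb)))).symm
        exact ⟨SimpleGraph.Walk.cons e1 (SimpleGraph.Walk.cons e2 SimpleGraph.Walk.nil),
          by simp⟩
    · -- r ≠ s
      obtain ⟨a', ha'ord, ha'mem⟩ := ppelt a.1 r hr hra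
      obtain ⟨b', hb'ord, hb'mem⟩ := ppelt b.1 s hs hsb
      have ha'1 : a' ≠ 1 := fun h => hr.ne_one (by rw [← ha'ord, h, orderOf_one])
      have hb'1 : b' ≠ 1 := fun h => hs.ne_one (by rw [← hb'ord, h, orderOf_one])
      have ha'b' : a' ≠ b' := fun h => hrs (by rw [← ha'ord, h, hb'ord])
      set A' : {g : G | g ≠ 1} := ⟨a', ha'1⟩
      set B' : {g : G | g ≠ 1} := ⟨b', hb'1⟩
      have e2 : Γ.Adj A' B' := by
        refine adj_of_coprime a' b' ha'b' ?_
        rw [ha'ord, hb'ord]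
        exact (Nat.coprime_primes hr hs).mpr hrs
      have w1 : ∃ w : Γ.Walk a A', w.length ≤ 1 := by
        refine walk_step ?_
        by_cases h : a.1 = a'
        · exact Or.inl (Subtype.ext h)
        · exact Or.inr ⟨h, a.1, Subgroup.mem_zpowers _, ha'mem⟩
      have w3 : ∃ w : Γ.Walk B' b, w.length ≤ 1 := by
        refine walk_step ?_
        by_cases h : b' = b.1
        · exact Or.inl (Subtype.ext h)
        · exact Or.inr ⟨h, b.1, hb'mem, Subgroup.mem_zpowers _⟩
      obtain ⟨u1, hu1⟩ := w1
      obtain ⟨u3, hu3⟩ := w3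
      refine ⟨u1.append ((SimpleGraph.Walk.cons e2 SimpleGraph.Walk.nil).append u3), ?_⟩
      simp [SimpleGraph.Walk.length_append]
      omega
  constructor
  · have hcard1 : Nat.card G ≠ 1 := fun h => hp.ne_one (Nat.dvd_one.mp (h ▸ hpG))
    have hcard : 1 < Nat.card G := lt_of_le_of_ne (Nat.one_le_iff_ne_zero.mpr Nat.card_pos.ne')
      (Ne.symm hcard1)
    have : Nontrivial G := Finite.one_lt_card_iff_nontrivial.mp hcard
    obtain ⟨g, hg⟩ := exists_ne (1 : G)
    haveI : Nonempty ({g : G | g ≠ 1} : Set G) := ⟨⟨g, hg⟩⟩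
    exact SimpleGraph.Connected.mk fun a b => (key a b).elim fun w _ => ⟨w⟩
  · exact key
end

section
/- Let G₁ be a finite group, n ∈ ℕ with gcd(|G₁|, n) = 1, and let e be the identity of G₁. Then for every x ∈ ℤ_n, the element (e, x) is a dominating vertex of the enhanced power graph of G₁ × ℤ_n. -/
lemma stmt_7_aux {G₁ : Type*} [Group G₁] [Finite G₁] (n : ℕ) (hn : 0 < n)
    (hcop : Nat.gcd (Nat.card G₁) n = 1) (g : G₁) (j : ℕ) (y : ZMod n) :
    ((g ^ j, Multiplicative.ofAdd y) : G₁ × Multiplicative (ZMod n)) ∈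
      Subgroup.zpowers ((g, Multiplicative.ofAdd (1 : ZMod n))) := by
  haveI : NeZero n := ⟨hn.ne'⟩
  have hm : Nat.Coprime (orderOf g) n :=
    Nat.Coprime.coprime_dvd_left (orderOf_dvd_natCard g) hcop
  obtain ⟨k, hk1, hk2⟩ := Nat.chineseRemainder hm j y.val
  refine ⟨(k : ℤ), ?_⟩
  show ((g, Multiplicative.ofAdd (1 : ZMod n)) : G₁ × Multiplicative (ZMod n)) ^ ((k : ℤ)) = _
  rw [zpow_natCast]
  have h1 : g ^ k = g ^ j := (pow_eq_pow_iff_modEq).mpr hk1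
  have h2 : (Multiplicative.ofAdd (1 : ZMod n)) ^ k = Multiplicative.ofAdd y := by
    rw [← ofAdd_nsmul]
    congr 1
    rw [nsmul_eq_mul, mul_one]
    have : ((k : ℕ) : ZMod n) = ((y.val : ℕ) : ZMod n) :=
      (ZMod.natCast_eq_natCast_iff _ _ _).mpr hk2
    simpa [ZMod.natCast_val, ZMod.cast_id] using this
  exact Prod.ext (by simpa using h1) (by simpa using h2)

theorem stmt_7 {G₁ : Type*} [Group G₁] [Finite G₁] (n : ℕ) (hn : 0 < n)
    (hcop : Nat.gcd (Nat.card G₁) n = 1) (x : ZMod n) :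
    IsDominating (enhancedPowerGraph (G₁ × Multiplicative (ZMod n)))
      ((1 : G₁), Multiplicative.ofAdd x) := by
  rintro ⟨g, t⟩ hne
  refine ⟨Ne.symm hne, (g, Multiplicative.ofAdd (1 : ZMod n)), ?_, ?_⟩
  · have := stmt_7_aux n hn hcop g 0 x
    simpa using this
  · have := stmt_7_aux n hn hcop g 1 (Multiplicative.toAdd t)
    simpa using this
end

section
/- Let G ≅ G₁ × ℤ_n where G₁ is a finite non-cyclic abelian group with no cyclic Sylow subgroup and gcd(|G₁|, n) = 1. Then the proper enhanced power graph G_e^{**}(G) (the graph obtained by deleting all dominating vertices from the enhanced power graph) is disconnected if and only if G₁ is a p-group. -/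
open Subgroup

section EpgAux

lemma epg_exists_pow_eq {G : Type*} [Group G] [Finite G] {a x : G} (h : a ∈ zpowers x) :
    ∃ k : ℕ, x ^ k = a :=
  (Submonoid.mem_powers_iff a x).mp (mem_powers_iff_mem_zpowers.mpr h)

lemma epg_ord_pow_div_prime {G : Type*} [Group G] [Finite G] (a : G) {r : ℕ} (hr : r.Prime)
    (h : r ∣ orderOf a) : orderOf (a ^ (orderOf a / r)) = r := by
  have h0 : orderOf a ≠ 0 := (orderOf_pos a).ne'
  rw [orderOf_pow, Nat.gcd_eq_right (Nat.div_dvd_of_dvd h), Nat.div_div_self h h0]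

lemma epg_prime_order_ne_one {G : Type*} [Group G] {a : G} {r : ℕ} (hr : r.Prime)
    (h : orderOf a = r) : a ≠ 1 := by
  intro e; rw [e, orderOf_one] at h; simp [h.symm] at hr; exact hr.one_lt.ne rfl

/-- Uniqueness of subgroups of prime order inside a cyclic (zpowers) group. -/
lemma epg_zpowers_eq_of_prime_order {G : Type*} [Group G] [Finite G] {r : ℕ} (hr : r.Prime)
    {w x y : G} (hx : x ∈ zpowers w) (hy : y ∈ zpowers w)
    (hox : orderOf x = r) (hoy : orderOf y = r) : zpowers x = zpowers y := by
  have hrm : r ∣ orderOf w := hox ▸ orderOf_dvd_of_mem_zpowers hx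
  set s := orderOf w / r with hs
  have hso : orderOf (w ^ s) = r := epg_ord_pow_div_prime w hr hrm
  have hmem : ∀ z : G, z ∈ zpowers w → orderOf z = r → zpowers z = zpowers (w ^ s) := by
    intro z hz hoz
    obtain ⟨i, hi⟩ := epg_exists_pow_eq hz
    have hzr : w ^ (i * r) = 1 := by
      rw [pow_mul, hi, ← hoz, pow_orderOf_eq_one]
    have hdvd : orderOf w ∣ i * r := orderOf_dvd_of_pow_eq_one hzr
    have hsr : s * r = orderOf w := Nat.div_mul_cancel hrm
    have hsi : s ∣ i := by
      have : s * r ∣ i * r := hsr ▸ hdvd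
      exact (Nat.mul_dvd_mul_iff_right hr.pos).mp this
    have hzmem : z ∈ zpowers (w ^ s) := by
      refine mem_powers_iff_mem_zpowers.mp ⟨i / s, show (w ^ s) ^ (i / s) = z from ?_⟩
      rw [← pow_mul, Nat.mul_div_cancel' hsi, hi]
    apply Subgroup.eq_of_le_of_card_ge (zpowers_le.mpr hzmem)
    rw [Nat.card_zpowers, Nat.card_zpowers, hso, hoz]
  rw [hmem x hx hox, hmem y hy hoy]

lemma epg_pow_div_prime {r k : ℕ} (hr : r.Prime) (hk : 1 ≤ k) : r ^ k / r = r ^ (k - 1) := by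
  have : r ^ k = r ^ (k - 1) * r := by rw [← pow_succ]; congr 1; omega
  rw [this]
  exact Nat.mul_div_cancel _ hr.pos |>.symm ▸ rfl

/-- An abelian `r`-group in which all elements of order `r` generate the same subgroup
is cyclic. -/
lemma epg_key {G : Type*} [CommGroup G] [Finite G] {r : ℕ} (hr : r.Prime) (hG : IsPGroup r G)
    (h : ∀ b c : G, orderOf b = r → orderOf c = r → b ∈ zpowers c) : IsCyclic G := by
  obtain ⟨g, hg⟩ := Finite.exists_max (orderOf : G → ℕ)
  have hall : ∀ x : G, x ∈ zpowers g := by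
    by_contra hc
    push_neg at hc
    have hT : {k | ∃ x : G, orderOf x = k ∧ x ∉ zpowers g}.Nonempty := by
      obtain ⟨x, hx⟩ := hc; exact ⟨orderOf x, x, rfl, hx⟩
    obtain ⟨x, hxo, hx⟩ := Nat.sInf_mem hT
    have hmin : ∀ z : G, orderOf z < orderOf x → z ∈ zpowers g := by
      intro z hz
      by_contra hzn
      have hmem : orderOf z ∈ {k | ∃ x : G, orderOf x = k ∧ x ∉ zpowers g} := ⟨z, rfl, hzn⟩
      have := Nat.sInf_le hmem
      omega
    obtain ⟨k, hk⟩ := (@IsPGroup.iff_orderOf _ _ _ ⟨hr⟩).mp hG x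
    obtain ⟨m, hm⟩ := (@IsPGroup.iff_orderOf _ _ _ ⟨hr⟩).mp hG g
    have hx1 : x ≠ 1 := fun e => hx (e ▸ one_mem _)
    have hkpos : 1 ≤ k := by
      rcases Nat.eq_zero_or_pos k with h0 | h1
      · exact absurd (by rw [← orderOf_eq_one_iff, hk, h0, pow_zero]) hx1
      · exact h1
    have hkm : k ≤ m := by
      have := hg x
      rw [hk, hm] at this
      exact (Nat.pow_le_pow_iff_right hr.one_lt).mp this
    have hmpos : 1 ≤ m := le_trans hkpos hkm
    have hordxr : orderOf (x ^ r) = r ^ (k - 1) := by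
      rw [orderOf_pow, hk, Nat.gcd_eq_right (dvd_pow_self r (by omega : k ≠ 0)),
        epg_pow_div_prime hr hkpos]
    have hxr : x ^ r ∈ zpowers g := by
      apply hmin
      rw [hordxr, hk]
      exact Nat.pow_lt_pow_right hr.one_lt (by omega)
    obtain ⟨t, ht⟩ := epg_exists_pow_eq hxr
    have hrt : r ∣ t := by
      by_contra hrt
      have hcop : Nat.Coprime (r ^ m) t := (hr.coprime_iff_not_dvd.mpr hrt).pow_left m
      have : orderOf (g ^ t) = r ^ m := by
        rw [orderOf_pow, hm, Nat.Coprime.gcd_eq_one hcop, Nat.div_one]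
      rw [ht, hordxr] at this
      have := Nat.pow_right_injective hr.two_le this
      omega
    obtain ⟨s, rfl⟩ := hrt
    set y := x * (g ^ s)⁻¹ with hy
    have hyr : y ^ r = 1 := by
      rw [hy, mul_pow, inv_pow, ← pow_mul, mul_comm s r, ← ht, mul_inv_cancel]
    have hyn : y ∉ zpowers g := by
      intro hmem
      apply hx
      have : x = y * g ^ s := by rw [hy]; group
      rw [this]
      exact mul_mem hmem (pow_mem (mem_zpowers g) s)
    have hy1 : y ≠ 1 := fun e => hyn (e ▸ one_mem _)
    have hoy : orderOf y = r :=
      ((Nat.dvd_prime hr).mp (orderOf_dvd_of_pow_eq_one hyr)).resolve_left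
        (fun e => hy1 (orderOf_eq_one_iff.mp e))
    have hoz : orderOf (g ^ (r ^ (m - 1))) = r := by
      rw [orderOf_pow, hm, Nat.gcd_eq_right (pow_dvd_pow r (by omega)),
        Nat.pow_div (by omega) hr.pos, show m - (m - 1) = 1 by omega, pow_one]
    have := h y (g ^ (r ^ (m - 1))) hoy hoz
    exact hyn (zpowers_le.mpr (pow_mem (mem_zpowers g) (r ^ (m - 1))) this)
  exact ⟨g, hall⟩

/-- If every Sylow `r`-subgroup is non-cyclic, there are two distinct subgroups of
order `r`. -/
lemma epg_twoSubgroups {G : Type*} [CommGroup G] [Finite G] {r : ℕ} (hr : r.Prime)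
    (hs : ∀ P : Sylow r G, ¬ IsCyclic (P : Subgroup G)) :
    ∃ b c : G, orderOf b = r ∧ orderOf c = r ∧ zpowers b ≠ zpowers c := by
  by_contra hc
  push_neg at hc
  haveI : Fact r.Prime := ⟨hr⟩
  obtain ⟨P⟩ : Nonempty (Sylow r G) := inferInstance
  apply hs P
  apply epg_key hr P.isPGroup'
  intro b c hb hc'
  have hb' : orderOf (b : G) = r := by rw [Subgroup.orderOf_coe]; exact hb
  have hc'' : orderOf (c : G) = r := by rw [Subgroup.orderOf_coe]; exact hc'
  have heq := hc (b : G) (c : G) hb' hc''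
  have : (b : G) ∈ zpowers (c : G) := heq ▸ mem_zpowers (b : G)
  obtain ⟨k, hk⟩ := mem_zpowers_iff.mp this
  exact mem_zpowers_iff.mpr ⟨k, by ext; rw [SubgroupClass.coe_zpow]; exact hk⟩

/-- Common cyclic membership for coprime-order elements in a commutative group. -/
lemma epg_mem_zpowers_of_coprime {G : Type*} [CommGroup G] [Finite G] (a b : G)
    (hcop : Nat.Coprime (orderOf a) (orderOf b)) : a ∈ zpowers (a * b) := by
  obtain ⟨t, ht1, ht2⟩ := Nat.chineseRemainder hcop 1 0
  refine mem_powers_iff_mem_zpowers.mp ⟨t, show (a * b) ^ t = a from ?_⟩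
  rw [mul_pow, pow_eq_pow_iff_modEq.mpr ht1, pow_eq_pow_iff_modEq.mpr ht2, pow_one, pow_zero,
    mul_one]

/-- Splitting common-generator existence across a coprime product with cyclic second factor. -/
lemma epg_split {G : Type*} [Group G] [Finite G] {H : Type*} [Group H] [Finite H] [IsCyclic H]
    (hcop : Nat.Coprime (Nat.card G) (Nat.card H)) (u v : G × H) :
    (∃ w : G × H, u ∈ zpowers w ∧ v ∈ zpowers w) ↔
      (∃ w₁ : G, u.1 ∈ zpowers w₁ ∧ v.1 ∈ zpowers w₁) := by
  constructor
  · rintro ⟨w, hu, hv⟩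
    obtain ⟨i, hi⟩ := mem_zpowers_iff.mp hu
    obtain ⟨j, hj⟩ := mem_zpowers_iff.mp hv
    exact ⟨w.1, mem_zpowers_iff.mpr ⟨i, by rw [← hi]; rfl⟩,
      mem_zpowers_iff.mpr ⟨j, by rw [← hj]; rfl⟩⟩
  · rintro ⟨w₁, hu1, hv1⟩
    obtain ⟨g, hg⟩ := IsCyclic.exists_generator (α := H)
    have hcop' : Nat.Coprime (orderOf w₁) (orderOf g) :=
      Nat.Coprime.coprime_dvd_right (orderOf_dvd_natCard g)
        (Nat.Coprime.coprime_dvd_left (orderOf_dvd_natCard w₁) hcop)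
    obtain ⟨i, hi⟩ := epg_exists_pow_eq hu1
    obtain ⟨j, hj⟩ := epg_exists_pow_eq hv1
    obtain ⟨k, hk⟩ := epg_exists_pow_eq (hg u.2)
    obtain ⟨l, hl⟩ := epg_exists_pow_eq (hg v.2)
    obtain ⟨t, ht1, ht2⟩ := Nat.chineseRemainder hcop' i k
    obtain ⟨t', ht1', ht2'⟩ := Nat.chineseRemainder hcop' j l
    refine ⟨(w₁, g), mem_powers_iff_mem_zpowers.mp ⟨t, ?_⟩,
      mem_powers_iff_mem_zpowers.mp ⟨t', ?_⟩⟩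
    · show (w₁, g) ^ t = u
      have : (w₁, g) ^ t = (w₁ ^ t, g ^ t) := rfl
      rw [this, pow_eq_pow_iff_modEq.mpr ht1, pow_eq_pow_iff_modEq.mpr ht2, hi, hk]
    · show (w₁, g) ^ t' = v
      have : (w₁, g) ^ t' = (w₁ ^ t', g ^ t') := rfl
      rw [this, pow_eq_pow_iff_modEq.mpr ht1', pow_eq_pow_iff_modEq.mpr ht2', hj, hl]

end EpgAux

theorem stmt_9 {G₁ : Type*} [CommGroup G₁] [Finite G₁] (hnc : ¬ IsCyclic G₁)
    (hsyl : ∀ p : ℕ, p.Prime → p ∣ Nat.card G₁ →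
      ∀ P : Sylow p G₁, ¬ IsCyclic (P : Subgroup G₁))
    (n : ℕ) (hn : 0 < n) (hcop : Nat.gcd (Nat.card G₁) n = 1) :
    ¬ ((enhancedPowerGraph (G₁ × Multiplicative (ZMod n))).induce
        {v | ¬ IsDominating (enhancedPowerGraph (G₁ × Multiplicative (ZMod n))) v}).Connected
      ↔ ∃ p : ℕ, p.Prime ∧ IsPGroup p G₁ := by
  haveI : NeZero n := ⟨hn.ne'⟩
  haveI : Nontrivial G₁ := by
    by_contra h
    rw [not_nontrivial_iff_subsingleton] at h
    exact hnc isCyclic_of_subsingleton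
  set Γ := enhancedPowerGraph (G₁ × Multiplicative (ZMod n)) with hΓ
  set S := {v | ¬ IsDominating Γ v} with hSdef
  have hcardH : Nat.card (Multiplicative (ZMod n)) = n := by
    rw [Nat.card_congr Multiplicative.toAdd, Nat.card_zmod]
  have hcop' : Nat.Coprime (Nat.card G₁) (Nat.card (Multiplicative (ZMod n))) := by
    rw [hcardH]; exact hcop
  -- characterization of dominating vertices
  have domiff : ∀ v : G₁ × Multiplicative (ZMod n), IsDominating Γ v ↔ v.1 = 1 := by
    intro v
    constructor
    · intro hd
      by_contra ha
      have ho : orderOf v.1 ≠ 1 := by rwa [Ne, orderOf_eq_one_iff]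
      obtain ⟨r, hr, hrd⟩ := Nat.exists_prime_and_dvd ho
      have hrcard : r ∣ Nat.card G₁ := hrd.trans (orderOf_dvd_natCard v.1)
      obtain ⟨b, c, hb, hc, hbc⟩ := epg_twoSubgroups hr (hsyl r hr hrcard)
      have ha' : orderOf (v.1 ^ (orderOf v.1 / r)) = r := epg_ord_pow_div_prime v.1 hr hrd
      obtain ⟨d, hd', hdne⟩ :
          ∃ d : G₁, orderOf d = r ∧ zpowers d ≠ zpowers (v.1 ^ (orderOf v.1 / r)) := by
        by_cases h1 : zpowers b = zpowers (v.1 ^ (orderOf v.1 / r))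
        · exact ⟨c, hc, fun h2 => hbc (h1.trans h2.symm)⟩
        · exact ⟨b, hb, h1⟩
      have hda : d ≠ v.1 := by
        intro e
        apply hdne
        by_cases horda : orderOf v.1 = r
        · have h2 : v.1 ^ (orderOf v.1 / r) = v.1 := by
            rw [horda, Nat.div_self hr.pos, pow_one]
          rw [e, h2]
        · exfalso; rw [e] at hd'; exact horda hd'
      have hu : (d, v.2) ≠ v := fun e => hda (congrArg Prod.fst e)
      have hadj : Γ.Adj v (d, v.2) := hd (d, v.2) hu
      obtain ⟨hne, w, hvw0, hdw0⟩ :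
          v ≠ (d, v.2) ∧ ∃ w, v ∈ zpowers w ∧ (d, v.2) ∈ zpowers w := hadj
      obtain ⟨w₁, hvw, hdw⟩ := (epg_split hcop' v (d, v.2)).mp ⟨w, hvw0, hdw0⟩
      have ha'w : v.1 ^ (orderOf v.1 / r) ∈ zpowers w₁ := pow_mem hvw _
      exact hdne (epg_zpowers_eq_of_prime_order hr hdw ha'w hd' ha')
    · intro h1 u hu
      refine ⟨fun e => hu e.symm, ?_⟩
      apply (epg_split hcop' v u).mpr
      exact ⟨u.1, by rw [h1]; exact one_mem _, mem_zpowers u.1⟩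
  have hS : ∀ (a : G₁) (x : Multiplicative (ZMod n)), a ≠ 1 → (a, x) ∈ S :=
    fun a x h hdom => h ((domiff _).mp hdom)
  constructor
  · -- disconnected → p-group
    intro hdis
    by_contra hnp
    apply hdis
    rw [SimpleGraph.connected_iff]
    have hcard1 : Nat.card G₁ ≠ 1 := fun h =>
      not_subsingleton G₁ (Nat.card_eq_one_iff_unique.mp h).1
    -- two distinct primes
    have hp : (Nat.card G₁).minFac.Prime := Nat.minFac_prime hcard1
    set p := (Nat.card G₁).minFac with hpdef
    obtain ⟨q, hq, hqdvd, hqp⟩ : ∃ q : ℕ, q.Prime ∧ q ∣ Nat.card G₁ ∧ q ≠ p := by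
      by_contra h
      push_neg at h
      refine hnp ⟨p, hp, IsPGroup.of_card (p := p)
        (Nat.eq_prime_pow_of_unique_prime_dvd ?_ (fun {d} hd hdvd => h d hd hdvd))⟩
      exact Nat.card_pos.ne'
    haveI : Fact p.Prime := ⟨hp⟩
    haveI : Fact q.Prime := ⟨hq⟩
    obtain ⟨ep, hep⟩ := exists_prime_orderOf_dvd_card' p (Nat.minFac_dvd _)
    obtain ⟨eqq, heqq⟩ := exists_prime_orderOf_dvd_card' q hqdvd
    -- reachability helper
    have hreach : ∀ (a b : G₁) (x y : Multiplicative (ZMod n)) (ha : (a, x) ∈ S)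
        (hb : (b, y) ∈ S), (∃ w₁ : G₁, a ∈ zpowers w₁ ∧ b ∈ zpowers w₁) →
        (Γ.induce S).Reachable ⟨(a, x), ha⟩ ⟨(b, y), hb⟩ := by
      intro a b x y ha hb hw
      by_cases he : (⟨(a, x), ha⟩ : ↥S) = ⟨(b, y), hb⟩
      · exact he ▸ SimpleGraph.Reachable.refl _
      · refine SimpleGraph.Adj.reachable
          (show Γ.Adj (a, x) (b, y) from ⟨fun e => he (Subtype.ext e), ?_⟩)
        exact (epg_split hcop' (a, x) (b, y)).mpr hw
    have hcopedge : ∀ a b : G₁, Nat.Coprime (orderOf a) (orderOf b) →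
        ∃ w₁ : G₁, a ∈ zpowers w₁ ∧ b ∈ zpowers w₁ := by
      intro a b hc
      exact ⟨a * b, epg_mem_zpowers_of_coprime a b hc,
        by rw [mul_comm]; exact epg_mem_zpowers_of_coprime b a hc.symm⟩
    have heqq1 : eqq ≠ 1 := epg_prime_order_ne_one hq heqq
    have hep1 : ep ≠ 1 := epg_prime_order_ne_one hp hep
    refine ⟨?_, ⟨⟨(eqq, 1), hS _ _ heqq1⟩⟩⟩
    have hbase : ∀ v : ↥S, (Γ.induce S).Reachable v ⟨(eqq, 1), hS _ _ heqq1⟩ := by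
      rintro ⟨⟨a, x⟩, haS⟩
      have ha1 : a ≠ 1 := fun e => haS ((domiff _).mpr e)
      have ho : orderOf a ≠ 1 := by rwa [Ne, orderOf_eq_one_iff]
      obtain ⟨r, hr, hrd⟩ := Nat.exists_prime_and_dvd ho
      have ha' : orderOf (a ^ (orderOf a / r)) = r := epg_ord_pow_div_prime a hr hrd
      have ha'1 : a ^ (orderOf a / r) ≠ 1 := epg_prime_order_ne_one hr ha'
      have step1 : (Γ.induce S).Reachable ⟨(a, x), haS⟩ ⟨(a ^ (orderOf a / r), x), hS _ _ ha'1⟩ :=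
        hreach a _ x x _ _ ⟨a, mem_zpowers a, pow_mem (mem_zpowers a) _⟩
      by_cases hrq : r = q
      · have h1 : (Γ.induce S).Reachable ⟨(a ^ (orderOf a / r), x), hS _ _ ha'1⟩
            ⟨(ep, x), hS _ _ hep1⟩ := by
          apply hreach
          apply hcopedge
          rw [ha', hep]
          exact (Nat.coprime_primes hr hp).mpr (hrq ▸ hqp.symm).symm
        have h2 : (Γ.induce S).Reachable ⟨(ep, x), hS _ _ hep1⟩ ⟨(eqq, 1), hS _ _ heqq1⟩ := by
          apply hreach
          apply hcopedge
          rw [hep, heqq]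
          exact (Nat.coprime_primes hp hq).mpr (fun e => hqp e.symm)
        exact step1.trans (h1.trans h2)
      · have h1 : (Γ.induce S).Reachable ⟨(a ^ (orderOf a / r), x), hS _ _ ha'1⟩
            ⟨(eqq, 1), hS _ _ heqq1⟩ := by
          apply hreach
          apply hcopedge
          rw [ha', heqq]
          exact (Nat.coprime_primes hr hq).mpr hrq
        exact step1.trans h1
    intro u v
    exact (hbase u).trans (hbase v).symm
  · -- p-group → disconnected
    rintro ⟨p, hp, hpg⟩ hconn
    haveI : Fact p.Prime := ⟨hp⟩
    obtain ⟨m, hm⟩ := IsPGroup.iff_card.mp hpg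
    have hcard1 : Nat.card G₁ ≠ 1 := fun h =>
      not_subsingleton G₁ (Nat.card_eq_one_iff_unique.mp h).1
    have hpdvd : p ∣ Nat.card G₁ := by
      rcases Nat.eq_zero_or_pos m with h0 | h1
      · exfalso; rw [h0, pow_zero] at hm; exact hcard1 hm
      · rw [hm]; exact dvd_pow_self p h1.ne'
    obtain ⟨b, c, hb, hc, hbc⟩ := epg_twoSubgroups hp (hsyl p hp hpdvd)
    have hb1 : b ≠ 1 := epg_prime_order_ne_one hp hb
    have hc1 : c ≠ 1 := epg_prime_order_ne_one hp hc
    -- adjacency preserves the minimal subgroup invariant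
    have hstep : ∀ u v : ↥S, (Γ.induce S).Adj u v →
        zpowers ((u : G₁ × Multiplicative (ZMod n)).1 ^
            (orderOf (u : G₁ × Multiplicative (ZMod n)).1 / p)) =
          zpowers ((v : G₁ × Multiplicative (ZMod n)).1 ^
            (orderOf (v : G₁ × Multiplicative (ZMod n)).1 / p)) := by
      rintro ⟨u, huS⟩ ⟨v, hvS⟩ hadj
      obtain ⟨hne, w, hu0, hv0⟩ :
          u ≠ v ∧ ∃ w, u ∈ zpowers w ∧ v ∈ zpowers w := hadj
      obtain ⟨w₁, huw, hvw⟩ := (epg_split hcop' u v).mp ⟨w, hu0, hv0⟩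
      have hu1 : u.1 ≠ 1 := fun e => huS ((domiff _).mpr e)
      have hv1 : v.1 ≠ 1 := fun e => hvS ((domiff _).mpr e)
      have hpu : p ∣ orderOf u.1 := by
        obtain ⟨k, hk⟩ := (@IsPGroup.iff_orderOf _ _ _ ⟨hp⟩).mp hpg u.1
        have : k ≠ 0 := by
          intro e; rw [e, pow_zero, orderOf_eq_one_iff] at hk; exact hu1 hk
        rw [hk]; exact dvd_pow_self p this
      have hpv : p ∣ orderOf v.1 := by
        obtain ⟨k, hk⟩ := (@IsPGroup.iff_orderOf _ _ _ ⟨hp⟩).mp hpg v.1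
        have : k ≠ 0 := by
          intro e; rw [e, pow_zero, orderOf_eq_one_iff] at hk; exact hv1 hk
        rw [hk]; exact dvd_pow_self p this
      exact epg_zpowers_eq_of_prime_order hp (pow_mem huw _) (pow_mem hvw _)
        (epg_ord_pow_div_prime u.1 hp hpu) (epg_ord_pow_div_prime v.1 hp hpv)
    have hwalk : ∀ u v : ↥S, (Γ.induce S).Reachable u v →
        zpowers ((u : G₁ × Multiplicative (ZMod n)).1 ^
            (orderOf (u : G₁ × Multiplicative (ZMod n)).1 / p)) =
          zpowers ((v : G₁ × Multiplicative (ZMod n)).1 ^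
            (orderOf (v : G₁ × Multiplicative (ZMod n)).1 / p)) := by
      intro u v h
      obtain ⟨w⟩ := h
      induction w with
      | nil => rfl
      | cons h' w' ih => exact (hstep _ _ h').trans ih
    have hr := hwalk ⟨(b, 1), hS _ _ hb1⟩ ⟨(c, 1), hS _ _ hc1⟩
      (hconn.preconnected _ _)
    apply hbc
    have h1 : b ^ (orderOf b / p) = b := by rw [hb, Nat.div_self hp.pos, pow_one]
    have h2 : c ^ (orderOf c / p) = c := by rw [hc, Nat.div_self hp.pos, pow_one]
    rw [← h1, ← h2]
    exact hr
end

section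
/- Let G be a finite non-cyclic abelian group with invariant factor decomposition involving distinct primes p₁,...,p_r, where for each prime p_i the exponents of its cyclic factors are t_{i1} ≤ t_{i2} ≤ ... ≤ t_{ik_i}. Let m = p₁^{t_{11}} p₂^{t_{21}} ⋯ p_r^{t_{r1}}. Then the vertex connectivity of the enhanced power graph of G is at most m − φ(m), where φ is Euler's totient function. -/
private lemma prod_dvd_aux' {ι : Type*} (s : Finset ι) (f : ι → ℕ) (n : ℕ)
    (hco : (s : Set ι).Pairwise (Function.onFun Nat.Coprime f)) (h : ∀ i ∈ s, f i ∣ n) :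
    ∏ i ∈ s, f i ∣ n := by
  classical
  induction s using Finset.induction with
  | empty => simpa using one_dvd n
  | @insert a s ha ih =>
      rw [Finset.prod_insert ha]
      have hcop : Nat.Coprime (f a) (∏ i ∈ s, f i) :=
        Nat.Coprime.prod_right fun i hi =>
          hco (by simp) (by simp [hi]) (fun hne => ha (hne ▸ hi))
      refine Nat.Coprime.mul_dvd_of_dvd_of_dvd hcop (h a (by simp)) ?_
      exact ih (hco.mono (Finset.coe_subset.mpr (Finset.subset_insert a s)))
        (fun i hi => h i (Finset.mem_insert_of_mem hi))


theorem stmt_10 {G : Type*} [CommGroup G] [Finite G] (hnc : ¬ IsCyclic G)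
    (r : ℕ) (p : Fin r → ℕ) (hp : ∀ i, (p i).Prime) (hpinj : Function.Injective p)
    (k : Fin r → ℕ) (hk : ∀ i, 1 ≤ k i)
    (t : (i : Fin r) → Fin (k i) → ℕ)
    (ht1 : ∀ i j, 1 ≤ t i j) (htmono : ∀ i, Monotone (t i))
    (hiso : Nonempty
      (G ≃* ((i : Fin r) → (j : Fin (k i)) → Multiplicative (ZMod (p i ^ t i j))))) :
    vertexConnectivity (enhancedPowerGraph G) ≤
      (∏ i : Fin r, p i ^ t i ⟨0, hk i⟩) -
        Nat.totient (∏ i : Fin r, p i ^ t i ⟨0, hk i⟩) := by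
  classical
  obtain ⟨e⟩ := hiso
  set P := ((i : Fin r) → (j : Fin (k i)) → Multiplicative (ZMod (p i ^ t i j))) with hP
  haveI : Finite P := Finite.of_equiv G e.toEquiv
  set m : ℕ := ∏ i : Fin r, p i ^ t i ⟨0, hk i⟩ with hm
  have hNZ : ∀ i j, NeZero (p i ^ t i j) := fun i j => ⟨pow_ne_zero _ (hp i).ne_zero⟩
  have hordDvd : ∀ (i : Fin r) (j : Fin (k i)) (a : Multiplicative (ZMod (p i ^ t i j))),
      orderOf a ∣ p i ^ t i j := by
    intro i j a
    haveI := hNZ i j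
    have h := orderOf_dvd_natCard a
    simpa [Nat.card_congr Multiplicative.toAdd, Nat.card_zmod] using h
  set X : P := fun i j => if j = (⟨0, hk i⟩ : Fin (k i)) then Multiplicative.ofAdd 1 else 1
    with hX
  have hX0 : ∀ i, X i ⟨0, hk i⟩ = Multiplicative.ofAdd 1 := fun i => if_pos rfl
  have hXne : ∀ i j, j ≠ (⟨0, hk i⟩ : Fin (k i)) → X i j = 1 := fun i j h => if_neg h
  have hordX0 : ∀ i, orderOf (X i ⟨0, hk i⟩) = p i ^ t i ⟨0, hk i⟩ := by
    intro i
    haveI := hNZ i ⟨0, hk i⟩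
    rw [hX0 i, orderOf_ofAdd_eq_addOrderOf, ZMod.addOrderOf_one]
  have hcopair : ((Finset.univ : Finset (Fin r)) : Set (Fin r)).Pairwise
      (Function.onFun Nat.Coprime fun i => p i ^ t i ⟨0, hk i⟩) := by
    intro i _ i' _ hne
    exact Nat.Coprime.pow _ _
      ((Nat.coprime_primes (hp i) (hp i')).mpr (fun h => hne (hpinj h)))
  have hXm : orderOf X = m := by
    have h1 : X ^ m = 1 := by
      funext i j
      show (X i j) ^ m = 1
      by_cases hj : j = (⟨0, hk i⟩ : Fin (k i))
      · subst hj
        apply orderOf_dvd_iff_pow_eq_one.mp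
        rw [hordX0 i, hm]
        exact Finset.dvd_prod_of_mem _ (Finset.mem_univ i)
      · rw [hXne i j hj, one_pow]
    have h2 : m ∣ orderOf X := by
      refine prod_dvd_aux' Finset.univ _ _ hcopair ?_
      intro i _
      rw [← hordX0 i]
      apply orderOf_dvd_of_pow_eq_one
      have := pow_orderOf_eq_one X
      exact congrFun (congrFun this i) ⟨0, hk i⟩
    exact Nat.dvd_antisymm (orderOf_dvd_of_pow_eq_one h1) h2
  have hkey : ∀ w : P, X ∈ Subgroup.zpowers w → Subgroup.zpowers w = Subgroup.zpowers X := by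
    intro w hw
    obtain ⟨n, hn⟩ := (Submonoid.mem_powers_iff X w).mp (mem_powers_iff_mem_zpowers.mpr hw)
    have hcomp : ∀ i j, (w i j) ^ n = X i j := fun i j => congrFun (congrFun hn i) j
    have hcopn : ∀ i, Nat.Coprime (p i) n ∧
        orderOf (w i ⟨0, hk i⟩) = p i ^ t i ⟨0, hk i⟩ := by
      intro i
      haveI := hNZ i ⟨0, hk i⟩
      set q := p i ^ t i ⟨0, hk i⟩ with hq
      have hq0 : q ≠ 0 := (hNZ i ⟨0, hk i⟩).out
      set d := orderOf (w i ⟨0, hk i⟩) with hd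
      have h1 : orderOf ((w i ⟨0, hk i⟩) ^ n) = q := by rw [hcomp, hordX0]
      have h2 : orderOf ((w i ⟨0, hk i⟩) ^ n) = d / Nat.gcd d n := orderOf_pow _
      have hdq : d ∣ q := hordDvd i ⟨0, hk i⟩ _
      have hqd : q ∣ d := by
        rw [← h1, h2]
        exact Nat.div_dvd_of_dvd (Nat.gcd_dvd_left d n)
      have hdeq : d = q := Nat.dvd_antisymm hdq hqd
      have hqq : q / Nat.gcd q n = q := by
        rw [hdeq] at h2
        rw [h2] at h1
        exact h1
      have hg : Nat.gcd q n ∣ q := Nat.gcd_dvd_left _ _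
      have h3 : q * Nat.gcd q n = q * 1 := by
        rw [mul_one]
        conv_rhs => rw [← Nat.div_mul_cancel hg]
        rw [hqq]
      have hgcd : Nat.gcd q n = 1 :=
        Nat.eq_of_mul_eq_mul_left (Nat.pos_of_ne_zero hq0) h3
      refine ⟨?_, hdeq⟩
      exact Nat.Coprime.coprime_dvd_left
        (dvd_pow_self (p i) (Nat.one_le_iff_ne_zero.mp (ht1 i ⟨0, hk i⟩))) hgcd
    have hwj : ∀ i j, j ≠ (⟨0, hk i⟩ : Fin (k i)) → w i j = 1 := by
      intro i j hj
      have h1 : orderOf (w i j) ∣ n :=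
        orderOf_dvd_of_pow_eq_one (by rw [hcomp i j, hXne i j hj])
      have h2 : orderOf (w i j) ∣ p i ^ t i j := hordDvd i j _
      have hco : Nat.Coprime (p i ^ t i j) n := Nat.Coprime.pow_left _ (hcopn i).1
      have h4 := Nat.dvd_gcd h2 h1
      rw [Nat.Coprime.gcd_eq_one hco] at h4
      exact orderOf_eq_one_iff.mp (Nat.dvd_one.mp h4)
    have hwm : orderOf w = m := by
      have h1 : w ^ m = 1 := by
        funext i j
        show (w i j) ^ m = 1
        by_cases hj : j = (⟨0, hk i⟩ : Fin (k i))
        · subst hj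
          apply orderOf_dvd_iff_pow_eq_one.mp
          rw [(hcopn i).2, hm]
          exact Finset.dvd_prod_of_mem _ (Finset.mem_univ i)
        · rw [hwj i j hj, one_pow]
      have h2 : m ∣ orderOf w := hXm ▸ orderOf_dvd_of_mem_zpowers hw
      exact Nat.dvd_antisymm (orderOf_dvd_of_pow_eq_one h1) h2
    exact (Subgroup.eq_of_le_of_card_ge (Subgroup.zpowers_le.mpr hw)
      (by rw [Nat.card_zpowers, Nat.card_zpowers, hXm, hwm])).symm
  -- transfer to G
  set x : G := e.symm X with hx
  have hex : e x = X := e.apply_symm_apply X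
  have hxm : orderOf x = m := by
    rw [← hXm, ← hex]
    exact (orderOf_injective e.toMonoidHom e.injective x).symm
  have hmemiff : ∀ (a g : G), g ∈ Subgroup.zpowers a ↔ e g ∈ Subgroup.zpowers (e a) := by
    intro a g
    rw [Subgroup.mem_zpowers_iff, Subgroup.mem_zpowers_iff]
    constructor
    · rintro ⟨z, hz⟩; exact ⟨z, by rw [← map_zpow, hz]⟩
    · rintro ⟨z, hz⟩; exact ⟨z, e.injective (by rw [map_zpow, hz])⟩
  have hkeyG : ∀ w : G, x ∈ Subgroup.zpowers w → Subgroup.zpowers w = Subgroup.zpowers x := by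
    intro w hw
    have h1 : X ∈ Subgroup.zpowers (e w) := hex ▸ (hmemiff w x).mp hw
    have h2 := hkey (e w) h1
    ext g
    rw [hmemiff w g, hmemiff x g, h2, hex]
  set U : Set G := {y | Subgroup.zpowers y = Subgroup.zpowers x} with hU
  set S : Set G := (Subgroup.zpowers x : Set G) \ U with hS
  have hUsub : U ⊆ (Subgroup.zpowers x : Set G) := by
    intro y hy
    have hy' : Subgroup.zpowers y = Subgroup.zpowers x := hy
    rw [← hy']
    exact Subgroup.mem_zpowers y
  have hUchar : ∀ y : G, y ∈ U ↔ y ∈ Subgroup.zpowers x ∧ orderOf y = m := by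
    intro y
    constructor
    · intro hy
      have hy' : Subgroup.zpowers y = Subgroup.zpowers x := hy
      refine ⟨hUsub hy, ?_⟩
      rw [← Nat.card_zpowers, hy', Nat.card_zpowers, hxm]
    · rintro ⟨hy1, hy2⟩
      show Subgroup.zpowers y = Subgroup.zpowers x
      exact Subgroup.eq_of_le_of_card_ge (Subgroup.zpowers_le.mpr hy1)
        (by rw [Nat.card_zpowers, Nat.card_zpowers, hy2, hxm])
  haveI : Fintype G := Fintype.ofFinite G
  haveI : IsCyclic (Subgroup.zpowers x) :=
    isCyclic_of_orderOf_eq_card (⟨x, Subgroup.mem_zpowers x⟩ : Subgroup.zpowers x)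
      (by rw [Subgroup.orderOf_mk, Nat.card_zpowers])
  have hcard_zx : Nat.card (Subgroup.zpowers x) = m := by rw [Nat.card_zpowers, hxm]
  have hUcard : U.ncard = Nat.totient m := by
    rw [← Nat.card_coe_set_eq]
    have hEq : Nat.card U = Nat.card {z : Subgroup.zpowers x // orderOf z = m} :=
      Nat.card_congr
      { toFun := fun y => ⟨⟨y.1, ((hUchar y.1).mp y.2).1⟩, by
          rw [Subgroup.orderOf_mk]; exact ((hUchar y.1).mp y.2).2⟩
        invFun := fun z => ⟨z.1.1, (hUchar z.1.1).mpr ⟨z.1.2, by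
          rw [Subgroup.orderOf_coe]; exact z.2⟩⟩
        left_inv := fun y => rfl
        right_inv := fun z => rfl }
    rw [hEq, Nat.card_eq_fintype_card, Fintype.card_subtype]
    exact IsCyclic.card_orderOf_eq_totient (by rw [← Nat.card_eq_fintype_card, hcard_zx])
  have h1 : (Subgroup.zpowers x : Set G).ncard = m := by
    rw [← Nat.card_coe_set_eq]
    simpa using hcard_zx
  have hScard : S.ncard = m - Nat.totient m := by
    calc S.ncard = (Subgroup.zpowers x : Set G).ncard - U.ncard := Set.ncard_diff hUsub
      _ = m - Nat.totient m := by rw [h1, hUcard]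
  set Γ := enhancedPowerGraph G with hΓ
  have hadj : ∀ u v : G, u ∈ U → Γ.Adj u v → v ∈ Subgroup.zpowers x := by
    rintro u v hu ⟨hne, w, huw, hvw⟩
    have hu' : Subgroup.zpowers u = Subgroup.zpowers x := hu
    have hxu : x ∈ Subgroup.zpowers u := by rw [hu']; exact Subgroup.mem_zpowers x
    have hxw : x ∈ Subgroup.zpowers w := (Subgroup.zpowers_le.mpr huw) hxu
    rw [← hkeyG w hxw]
    exact hvw
  have hxU : x ∈ U := rfl
  have hxS : x ∈ Sᶜ := fun h => h.2 hxU
  obtain ⟨y, hy⟩ : ∃ y : G, y ∉ Subgroup.zpowers x := by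
    by_contra h
    push_neg at h
    exact hnc ⟨⟨x, h⟩⟩
  have hyS : y ∈ Sᶜ := fun h => hy h.1
  have hdisc : ¬ (Γ.induce Sᶜ).Connected := by
    intro hcon
    have hwalk : ∀ (a b : (Sᶜ : Set G)), (Γ.induce Sᶜ).Walk a b → (a : G) ∈ U → (b : G) ∈ U := by
      intro a b wab
      induction wab with
      | nil => exact id
      | @cons a c b h q ih =>
          intro ha
          apply ih
          have hadj' : Γ.Adj (a : G) (c : G) := h
          have hc1 : (c : G) ∈ Subgroup.zpowers x := hadj _ _ ha hadj'
          by_contra hcU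
          exact c.2 ⟨hc1, hcU⟩
    obtain ⟨w⟩ := hcon.preconnected ⟨x, hxS⟩ ⟨y, hyS⟩
    exact hy (hUsub (hwalk _ _ w hxU))
  calc vertexConnectivity Γ ≤ S.ncard := Nat.sInf_le ⟨S, rfl, hdisc⟩
    _ = m - Nat.totient m := hScard
end

section
/- Let G ≅ G₁ × ℤ_n where G₁ is a finite non-cyclic abelian p-group (so it has no cyclic Sylow subgroup) and gcd(|G₁|, n) = 1 with n > 1. Then the vertex connectivity of the enhanced power graph of G equals n. -/
open Subgroup Finset

/-- In a finite `p`-group, if `x ≠ 1` lies in the cyclic subgroup generated by `w`,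
then the unique order-`p` subgroup of `⟨x⟩` equals that of `⟨w⟩`. -/
lemma line_eq_of_mem {p : ℕ} (hp : p.Prime) {G : Type*} [Group G] [Finite G]
    (hpG : IsPGroup p G) {x w : G} (hx : x ≠ 1) (hxw : x ∈ zpowers w) :
    zpowers (x ^ (orderOf x / p)) = zpowers (w ^ (orderOf w / p)) := by
  haveI : Fact p.Prime := ⟨hp⟩
  have hw : w ≠ 1 := by
    rintro rfl
    rw [zpowers_one_eq_bot, Subgroup.mem_bot] at hxw
    exact hx hxw
  have hpx : p ∣ orderOf x := by
    obtain ⟨m, hm⟩ := IsPGroup.iff_orderOf.mp hpG x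
    rcases Nat.eq_zero_or_pos m with rfl | hm0
    · simp at hm; exact absurd hm hx
    · rw [hm]; exact dvd_pow_self p hm0.ne'
  have hpw : p ∣ orderOf w := by
    obtain ⟨m, hm⟩ := IsPGroup.iff_orderOf.mp hpG w
    rcases Nat.eq_zero_or_pos m with rfl | hm0
    · simp at hm; exact absurd hm hw
    · rw [hm]; exact dvd_pow_self p hm0.ne'
  have hxo : orderOf x ≠ 0 := (orderOf_pos x).ne'
  have hwo : orderOf w ≠ 0 := (orderOf_pos w).ne'
  set e := x ^ (orderOf x / p) with he
  set f := w ^ (orderOf w / p) with hf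
  have hoe : orderOf e = p := orderOf_pow_orderOf_div hxo hpx
  have hof : orderOf f = p := orderOf_pow_orderOf_div hwo hpw
  -- e ∈ zpowers f
  have hef : e ∈ zpowers f := by
    obtain ⟨t, ht⟩ := ((isOfFinOrder_of_finite w).mem_powers_iff_mem_zpowers).mpr hxw
    -- ht : w ^ t = x
    have ht' : w ^ t = x := ht
    have hsw : w ^ (t * (orderOf x / p)) = e := by rw [pow_mul, ht']
    have hep : e ^ p = 1 := by rw [← hoe]; exact pow_orderOf_eq_one e
    have hdvd : orderOf w ∣ t * (orderOf x / p) * p := by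
      apply orderOf_dvd_of_pow_eq_one
      rw [pow_mul, hsw, hep]
    obtain ⟨r, hr⟩ : ∃ r, orderOf w = (orderOf w / p) * p := ⟨0, (Nat.div_mul_cancel hpw).symm⟩
    rw [hr] at hdvd
    have h2 : (orderOf w / p) ∣ t * (orderOf x / p) :=
      (Nat.mul_dvd_mul_iff_right hp.pos).mp hdvd
    obtain ⟨u, hu⟩ := h2
    refine ⟨(u : ℤ), ?_⟩
    show f ^ (u : ℤ) = e
    rw [zpow_natCast, ← hsw, hu, hf, ← pow_mul]
  -- equal subgroups of order p
  have hle : zpowers e ≤ zpowers f := (zpowers_le).mpr hef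
  have hcard : Nat.card (zpowers e) = Nat.card (zpowers f) := by
    rw [Nat.card_zpowers, Nat.card_zpowers, hoe, hof]
  apply SetLike.coe_injective
  refine Set.eq_of_subset_of_ncard_le (SetLike.coe_subset_coe.mpr hle) ?_ (Set.toFinite _)
  rw [← Nat.card_coe_set_eq, ← Nat.card_coe_set_eq]
  simp only [SetLike.coe_sort_coe]
  rw [hcard]

lemma pair_mem_zpowers {G M : Type*} [Group G] [Group M] [Finite G] [Finite M]
    (x : G) (g₀ : M) (hg : ∀ m : M, m ∈ zpowers g₀)
    (hco : Nat.Coprime (orderOf x) (orderOf g₀)) (y : M) :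
    ((x, y) : G × M) ∈ zpowers ((x, g₀) : G × M) ∧
      ((1, y) : G × M) ∈ zpowers ((x, g₀) : G × M) := by
  obtain ⟨t, ht⟩ := ((isOfFinOrder_of_finite g₀).mem_powers_iff_mem_zpowers).mpr (hg y)
  have ht' : g₀ ^ t = y := ht
  constructor
  · obtain ⟨k, hk1, hk2⟩ := Nat.chineseRemainder hco 1 t
    refine ⟨(k : ℤ), ?_⟩
    show ((x, g₀) : G × M) ^ (k : ℤ) = (x, y)
    rw [zpow_natCast, Prod.pow_mk, Prod.mk.injEq]
    constructor
    · calc x ^ k = x ^ 1 := pow_eq_pow_iff_modEq.mpr hk1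
        _ = x := pow_one x
    · calc g₀ ^ k = g₀ ^ t := pow_eq_pow_iff_modEq.mpr hk2
        _ = y := ht'
  · obtain ⟨k, hk1, hk2⟩ := Nat.chineseRemainder hco 0 t
    refine ⟨(k : ℤ), ?_⟩
    show ((x, g₀) : G × M) ^ (k : ℤ) = (1, y)
    rw [zpow_natCast, Prod.pow_mk, Prod.mk.injEq]
    constructor
    · calc x ^ k = x ^ 0 := pow_eq_pow_iff_modEq.mpr hk1
        _ = 1 := pow_zero x
    · calc g₀ ^ k = g₀ ^ t := pow_eq_pow_iff_modEq.mpr hk2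
        _ = y := ht'

lemma card_pow_le {p : ℕ} (hp : p.Prime) {G : Type*} [CommGroup G] [Fintype G] [DecidableEq G]
    (hpG : IsPGroup p G)
    (hbase : #{a : G | a ^ p = 1} ≤ p) (m : ℕ) (hm : 0 < m) :
    #{a : G | a ^ m = 1} ≤ m := by
  haveI : Fact p.Prime := ⟨hp⟩
  have hppow : ∀ j : ℕ, #{a : G | a ^ (p ^ j) = 1} ≤ p ^ j := by
    intro j
    induction j with
    | zero =>
      simp only [pow_zero, pow_one]
      calc #{a : G | a = 1} ≤ #({1} : Finset G) := by
            apply Finset.card_le_card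
            intro a ha
            simp only [Finset.mem_filter] at ha
            simp [ha.2]
        _ = 1 := by simp
    | succ j ih =>
      have key : #{a : G | a ^ (p ^ (j+1)) = 1} ≤
          p ^ j * #(({a : G | a ^ (p ^ (j+1)) = 1} : Finset G).image (fun a => a ^ (p ^ j))) := by
        apply Finset.card_le_mul_card_image
        intro b hb
        obtain ⟨a₀, ha₀, ha₀b⟩ := Finset.mem_image.mp hb
        calc #{a ∈ ({a : G | a ^ (p ^ (j+1)) = 1} : Finset G) | a ^ (p ^ j) = b}
            ≤ #{a : G | a ^ (p ^ j) = 1} := by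
              apply Finset.card_le_card_of_injOn (fun a => a * a₀⁻¹)
              · intro a ha
                simp only [Finset.mem_coe, Finset.mem_filter, Finset.mem_univ, true_and] at ha ⊢
                rw [mul_pow, ha.2, inv_pow, ha₀b, mul_inv_cancel]
              · intro a _ b _ hab
                exact mul_right_cancel hab
          _ ≤ p ^ j := ih
      have himg : (({a : G | a ^ (p ^ (j+1)) = 1} : Finset G).image (fun a => a ^ (p ^ j)))
          ⊆ ({a : G | a ^ p = 1} : Finset G) := by
        intro b hb
        obtain ⟨a, ha, hab⟩ := Finset.mem_image.mp hb
        simp only [Finset.mem_filter, Finset.mem_univ, true_and] at ha ⊢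
        rw [← hab, ← pow_mul, ← pow_succ, ha]
      calc #{a : G | a ^ (p ^ (j+1)) = 1}
          ≤ p ^ j * #(({a : G | a ^ (p ^ (j+1)) = 1} : Finset G).image (fun a => a ^ (p ^ j))) := key
        _ ≤ p ^ j * p := by
            apply Nat.mul_le_mul_left
            exact le_trans (Finset.card_le_card himg) hbase
        _ = p ^ (j + 1) := (pow_succ p j).symm
  -- general m
  set J := m.factorization p with hJ
  have hsub : ({a : G | a ^ m = 1} : Finset G) ⊆ ({a : G | a ^ (p ^ J) = 1} : Finset G) := by
    intro a ha
    simp only [Finset.mem_filter, Finset.mem_univ, true_and] at ha ⊢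
    obtain ⟨i, hi⟩ := IsPGroup.iff_orderOf.mp hpG a
    have h1 : orderOf a ∣ m := orderOf_dvd_of_pow_eq_one ha
    have h2 : p ^ i ∣ m := hi ▸ h1
    have h3 : i ≤ J := (Nat.Prime.pow_dvd_iff_le_factorization hp hm.ne').mp h2
    exact orderOf_dvd_iff_pow_eq_one.mp (hi ▸ pow_dvd_pow p h3)
  calc #{a : G | a ^ m = 1} ≤ #{a : G | a ^ (p ^ J) = 1} := Finset.card_le_card hsub
    _ ≤ p ^ J := hppow J
    _ ≤ m := Nat.le_of_dvd hm (Nat.ordProj_dvd m p)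

lemma exists_two_lines {p : ℕ} (hp : p.Prime) {G : Type*} [CommGroup G] [Finite G]
    (hpG : IsPGroup p G) (hnc : ¬ IsCyclic G) :
    ∃ a b : G, orderOf a = p ∧ orderOf b = p ∧ zpowers a ≠ zpowers b := by
  classical
  haveI : Fact p.Prime := ⟨hp⟩
  haveI : Fintype G := Fintype.ofFinite G
  haveI : Nontrivial G := by
    rcases subsingleton_or_nontrivial G with h | h
    · exact absurd (by infer_instance : IsCyclic G) hnc
    · exact h
  obtain ⟨k, hk0, hk⟩ := hpG.nontrivial_iff_card.mp inferInstance
  have hpdvd : p ∣ Nat.card G := hk ▸ dvd_pow_self p hk0.ne'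
  obtain ⟨a, ha⟩ := exists_prime_orderOf_dvd_card' p hpdvd
  by_contra hcon
  push_neg at hcon
  have hall : ∀ b : G, orderOf b = p → zpowers b = zpowers a := by
    intro b hb
    by_contra hne
    exact hne (by simpa using hcon b a hb ha)
  -- all p-th roots of 1 are in zpowers a
  have hbase : #{g : G | g ^ p = 1} ≤ p := by
    have hsub : ({g : G | g ^ p = 1} : Finset G) ⊆ (zpowers a : Set G).toFinset := by
      intro g hg
      simp only [Finset.mem_filter, Finset.mem_univ, true_and] at hg
      rw [Set.mem_toFinset]
      rcases eq_or_ne g 1 with rfl | hg1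
      · exact Subgroup.one_mem _
      · have : orderOf g = p := by
          have h1 : orderOf g ∣ p := orderOf_dvd_of_pow_eq_one hg
          rcases (Nat.dvd_prime hp).mp h1 with h | h
          · exact absurd (orderOf_eq_one_iff.mp h) hg1
          · exact h
        have := hall g this
        rw [← this]
        exact mem_zpowers g
    calc #{g : G | g ^ p = 1} ≤ #(zpowers a : Set G).toFinset := Finset.card_le_card hsub
      _ = Nat.card (zpowers a) := by
          rw [Set.toFinset_card, Nat.card_eq_fintype_card]
          congr 1
      _ = p := by rw [Nat.card_zpowers, ha]
  exact hnc (isCyclic_of_card_pow_eq_one_le (fun m hm => card_pow_le hp hpG hbase m hm))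

lemma reachable_invariant {V α : Type*} {Γ : SimpleGraph V} {F : V → α}
    (h : ∀ u v, Γ.Adj u v → F u = F v) {u v : V} (hr : Γ.Reachable u v) : F u = F v := by
  obtain ⟨w⟩ := hr
  induction w with
  | nil => rfl
  | cons h' _ ih => exact (h _ _ h').trans ih

theorem stmt_11 {p : ℕ} (hp : p.Prime) {G₁ : Type*} [CommGroup G₁] [Finite G₁]
    (hpG : IsPGroup p G₁) (hnc : ¬ IsCyclic G₁)
    (n : ℕ) (hn : 1 < n) (hcop : Nat.gcd (Nat.card G₁) n = 1) :
    vertexConnectivity (enhancedPowerGraph (G₁ × Multiplicative (ZMod n))) = n := by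
  haveI : NeZero n := ⟨by omega⟩
  set M := Multiplicative (ZMod n) with hM
  set Γ := enhancedPowerGraph (G₁ × M) with hΓ
  obtain ⟨g₀, hg₀⟩ := IsCyclic.exists_generator (α := M)
  have hcardM : Nat.card M = n := by
    rw [hM, Nat.card_congr Multiplicative.toAdd, Nat.card_zmod]
  have hog₀ : orderOf g₀ = n := by
    rw [orderOf_eq_card_of_forall_mem_zpowers hg₀, hcardM]
  -- the set of "dominating" vertices
  set S : Set (G₁ × M) := {v | v.1 = 1} with hS
  have hSrange : S = Set.range (fun b : M => ((1 : G₁), b)) := by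
    ext ⟨u, v⟩
    simp only [hS, Set.mem_setOf_eq, Set.mem_range, Prod.mk.injEq]
    constructor
    · rintro rfl; exact ⟨v, rfl, rfl⟩
    · rintro ⟨b, h1, h2⟩; exact h1.symm
  have hScard : S.ncard = n := by
    rw [hSrange, ← Nat.card_coe_set_eq,
      Nat.card_range_of_injective (f := fun b : M => ((1 : G₁), b))
        (fun a b hab => (Prod.mk.injEq _ _ _ _).mp hab |>.2), hcardM]
  -- coprimality helper
  have hcopx : ∀ x : G₁, Nat.Coprime (orderOf x) (orderOf g₀) := by
    intro x
    rw [hog₀]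
    exact Nat.Coprime.coprime_dvd_left (orderOf_dvd_natCard x) hcop
  -- upper bound: removing S disconnects
  have hdisc : ¬ (Γ.induce Sᶜ).Connected := by
    intro hcon
    obtain ⟨a, b, ha, hb, hab⟩ := exists_two_lines hp hpG hnc
    have ha1 : a ≠ 1 := by rintro rfl; rw [orderOf_one] at ha; exact hp.one_lt.ne ha
    have hb1 : b ≠ 1 := by rintro rfl; rw [orderOf_one] at hb; exact hp.one_lt.ne hb
    set A : ↥Sᶜ := ⟨((a : G₁), (1 : M)), by simp [hS, ha1]⟩ with hA
    set B : ↥Sᶜ := ⟨((b : G₁), (1 : M)), by simp [hS, hb1]⟩ with hB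
    set F : ↥Sᶜ → Subgroup G₁ := fun v => zpowers (v.val.1 ^ (orderOf v.val.1 / p)) with hF
    have hinv : ∀ u v : ↥Sᶜ, (Γ.induce Sᶜ).Adj u v → F u = F v := by
      rintro u v ⟨hne, w, hu, hv⟩
      have hu1 : u.val.1 ∈ zpowers w.1 := by
        obtain ⟨k, hk⟩ := hu
        have hk' : w ^ k = (u : G₁ × M) := hk
        exact ⟨k, by show w.1 ^ k = (u : G₁ × M).1; rw [← hk']; simp⟩
      have hv1 : v.val.1 ∈ zpowers w.1 := by
        obtain ⟨k, hk⟩ := hv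
        have hk' : w ^ k = (v : G₁ × M) := hk
        exact ⟨k, by show w.1 ^ k = (v : G₁ × M).1; rw [← hk']; simp⟩
      have hune : u.val.1 ≠ 1 := u.2
      have hvne : v.val.1 ≠ 1 := v.2
      rw [hF]
      exact (line_eq_of_mem hp hpG hune hu1).trans (line_eq_of_mem hp hpG hvne hv1).symm
    have := reachable_invariant hinv (hcon.preconnected A B)
    rw [hF] at this
    simp only [hA, hB] at this
    rw [ha, hb, Nat.div_self hp.pos, pow_one, pow_one] at this
    exact hab this
  -- lower bound: any set with fewer than n vertices doesn't disconnect
  have hlower : ∀ s : Set (G₁ × M), s.ncard < n → (Γ.induce sᶜ).Connected := by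
    intro s hs
    have : ∃ b : M, ((1 : G₁), b) ∉ s := by
      by_contra hcon
      push_neg at hcon
      have hsub : Set.range (fun b : M => ((1 : G₁), b)) ⊆ s := by
        rintro _ ⟨b, rfl⟩; exact hcon b
      have := Set.ncard_le_ncard hsub (Set.toFinite s)
      rw [← hSrange, hScard] at this
      omega
    obtain ⟨b, hbs⟩ := this
    set d : ↥sᶜ := ⟨((1 : G₁), b), hbs⟩ with hd
    have hreach : ∀ u : ↥sᶜ, (Γ.induce sᶜ).Reachable d u := by
      intro u
      rcases eq_or_ne u d with rfl | hne
      · exact SimpleGraph.Reachable.refl _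
      · have hvals : d.val ≠ u.val := fun h => hne (Subtype.ext h.symm)
        obtain ⟨h1, h2⟩ := pair_mem_zpowers u.val.1 g₀ hg₀ (hcopx u.val.1) u.val.2
        obtain ⟨-, h3⟩ := pair_mem_zpowers u.val.1 g₀ hg₀ (hcopx u.val.1) b
        have : (Γ.induce sᶜ).Adj d u := by
          refine ⟨hvals, (u.val.1, g₀), h3, ?_⟩
          convert h1 <;> rfl
        exact this.reachable
    rw [SimpleGraph.connected_iff]
    exact ⟨fun u v => (hreach u).symm.trans (hreach v), ⟨d⟩⟩
  -- conclude
  apply le_antisymm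
  · exact Nat.sInf_le ⟨S, hScard, hdisc⟩
  · have hne2 : {m | ∃ s : Set (G₁ × M), s.ncard = m ∧ ¬ (Γ.induce sᶜ).Connected}.Nonempty :=
      ⟨n, S, hScard, hdisc⟩
    apply le_csInf hne2
    rintro m ⟨s, rfl, hdis⟩
    by_contra hlt
    push_neg at hlt
    exact hdis (hlower s hlt)
end

section
/- Let G = ℤ_{p^{t₁}} × ℤ_{p^{t₂}} × ⋯ × ℤ_{p^{t_r}} with r ≥ 2 be a finite non-cyclic abelian p-group. Then the number of connected components of the enhanced power graph of G with the identity removed equals (p^r − 1)/(p − 1). -/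
open Subgroup

-- number of p-torsion elements of ZMod (p^t)
lemma aux_card_torsion {p : ℕ} (hp : p.Prime) {tt : ℕ} (ht : 1 ≤ tt) :
    Nat.card {x : ZMod (p ^ tt) // p • x = 0} = p := by
  haveI : NeZero (p ^ tt) := ⟨pow_ne_zero _ hp.ne_zero⟩
  have hlt : ∀ k : Fin p, k.1 * p ^ (tt - 1) < p ^ tt := by
    intro k
    calc k.1 * p ^ (tt - 1) < p * p ^ (tt - 1) :=
          (Nat.mul_lt_mul_right (pow_pos hp.pos _)).mpr k.2
      _ = p ^ tt := by rw [← pow_succ']; congr 1; omega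
  have hmem : ∀ k : Fin p, p • ((k.1 * p ^ (tt - 1) : ℕ) : ZMod (p ^ tt)) = 0 := by
    intro k
    have h1 : (p : ℕ) • ((k.1 * p ^ (tt - 1) : ℕ) : ZMod (p ^ tt)) =
        ((p * (k.1 * p ^ (tt - 1)) : ℕ) : ZMod (p ^ tt)) := by push_cast; ring
    rw [h1, ZMod.natCast_eq_zero_iff]
    refine ⟨k.1, ?_⟩
    rw [mul_comm (k.1 : ℕ), ← mul_assoc, ← pow_succ']
    congr 2; omega
  have hcongr : Nat.card {x : ZMod (p ^ tt) // p • x = 0} = Nat.card (Fin p) := by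
    refine (Nat.card_eq_of_bijective (fun k : Fin p =>
      ⟨((k.1 * p ^ (tt - 1) : ℕ) : ZMod (p ^ tt)), hmem k⟩) ⟨?_, ?_⟩).symm
    · intro a b hab
      simp only [Subtype.mk.injEq] at hab
      have := (ZMod.val_cast_of_lt (hlt a)) ▸ (ZMod.val_cast_of_lt (hlt b)) ▸
        congrArg ZMod.val hab
      have hp1 : 0 < p ^ (tt - 1) := pow_pos hp.pos _
      exact Fin.ext (Nat.eq_of_mul_eq_mul_right hp1 this)
    · rintro ⟨x, hx⟩
      have hx' : (p ^ tt : ℕ) ∣ p * x.val := by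
        rw [← ZMod.natCast_eq_zero_iff]
        push_cast
        rw [ZMod.natCast_val, ZMod.cast_id]
        simpa [nsmul_eq_mul] using hx
      have hdvd : p ^ (tt - 1) ∣ x.val := by
        have h2 : p ^ tt = p * p ^ (tt - 1) := by rw [← pow_succ']; congr 1; omega
        have hx'' : p * p ^ (tt - 1) ∣ p * x.val := by rw [← h2]; exact hx'
        exact (mul_dvd_mul_iff_left (by exact_mod_cast hp.ne_zero : (p:ℕ) ≠ 0)).mp hx''
      obtain ⟨k, hk⟩ := hdvd
      have hklt : k < p := by
        have := ZMod.val_lt x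
        by_contra h
        push_neg at h
        have : p ^ tt ≤ x.val := by
          calc p ^ tt = p ^ (tt-1) * p := by rw [← pow_succ]; congr 1; omega
            _ ≤ p ^ (tt-1) * k := Nat.mul_le_mul_left _ h
            _ = x.val := hk.symm
        omega
      refine ⟨⟨k, hklt⟩, ?_⟩
      ext
      simp only
      rw [show (k : ℕ) * p ^ (tt-1) = x.val by rw [hk, mul_comm]]
      rw [ZMod.natCast_val, ZMod.cast_id]
  rw [hcongr, Nat.card_eq_fintype_card, Fintype.card_fin]

lemma aux_card_ne {α : Type*} [Finite α] (a : α) :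
    Nat.card {x : α // x ≠ a} = Nat.card α - 1 := by
  classical
  haveI := Fintype.ofFinite α
  simp only [Nat.card_eq_fintype_card]
  have : Fintype.card {x : α // ¬ (x = a)} = Fintype.card α - 1 := by
    rw [Fintype.card_subtype_compl, Fintype.card_subtype_eq]
  exact this

lemma aux_zpowers_eq {G : Type*} [Group G] [Finite G] {x y : G}
    (hx : x ∈ zpowers y) (h : orderOf x = orderOf y) : zpowers x = zpowers y := by
  refine Subgroup.eq_of_le_of_card_ge ((zpowers_le).mpr hx) ?_
  rw [Nat.card_zpowers, Nat.card_zpowers, h]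

-- unique subgroup of order p in a cyclic p-group
lemma aux_socle_unique {G : Type*} [Group G] [Finite G] {p : ℕ} (hp : p.Prime)
    {w x y : G} (hx : x ∈ zpowers w) (hy : y ∈ zpowers w)
    (hox : orderOf x = p) (hoy : orderOf y = p) {k : ℕ} (how : orderOf w = p ^ k) :
    zpowers x = zpowers y := by
  have key : ∀ z : G, z ∈ zpowers w → orderOf z = p →
      zpowers z = zpowers (w ^ p ^ (k - 1)) := by
    intro z hz hoz
    have hk : k ≠ 0 := by
      rintro rfl
      rw [pow_zero, orderOf_eq_one_iff] at how
      rw [how] at hz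
      simp only [zpowers_one_eq_bot, Subgroup.mem_bot] at hz
      rw [hz, orderOf_one] at hoz
      exact hp.one_lt.ne' hoz.symm
    obtain ⟨a, ha'⟩ := mem_powers_iff_mem_zpowers.mpr hz
    have ha : w ^ a = z := ha'
    have hzp : z ^ p = 1 := by rw [← hoz]; exact pow_orderOf_eq_one z
    have hdvd : p ^ k ∣ a * p := by
      rw [← how]
      apply orderOf_dvd_of_pow_eq_one
      rw [pow_mul, ha, hzp]
    have hd2 : p ^ (k - 1) ∣ a := by
      have h3 : p ^ (k - 1) * p ∣ a * p := by
        rw [show p ^ (k-1) * p = p ^ k by rw [← pow_succ]; congr 1; omega]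
        exact hdvd
      exact (Nat.mul_dvd_mul_iff_right hp.pos).mp h3
    obtain ⟨m, hm⟩ := hd2
    have hzmem : z ∈ zpowers (w ^ p ^ (k - 1)) := by
      rw [← ha, hm, pow_mul]
      exact npow_mem_zpowers _ _
    refine aux_zpowers_eq hzmem ?_
    rw [hoz, orderOf_pow, how, Nat.gcd_eq_right (pow_dvd_pow p (by omega : k - 1 ≤ k)),
      Nat.pow_div (by omega) hp.pos, show k - (k-1) = 1 by omega, pow_one]
  rw [key x hx hox, key y hy hoy]

theorem aux_main {G : Type*} [CommGroup G] [Finite G] {p : ℕ} (hp : p.Prime)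
    (hG : IsPGroup p G) :
    Nat.card {x : G // x ^ p = 1} - 1 =
      Nat.card ((enhancedPowerGraph G).induce {g | g ≠ 1}).ConnectedComponent * (p - 1) := by
  classical
  haveI := Fact.mk hp
  -- the setoid of order-p elements, identified when generating the same subgroup
  let st : Setoid {h : G // orderOf h = p} :=
    ⟨fun a b => Subgroup.zpowers a.1 = Subgroup.zpowers b.1,
      ⟨fun _ => rfl, Eq.symm, Eq.trans⟩⟩
  have hne1 : ∀ x : G, orderOf x = p → x ≠ 1 := by
    intro x hx h1
    rw [h1, orderOf_one] at hx
    exact hp.one_lt.ne' hx.symm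
  -- socle order
  have hsoc : ∀ g : G, g ≠ 1 → orderOf (g ^ (orderOf g / p)) = p := by
    intro g hg
    obtain ⟨k, hk⟩ := (IsPGroup.iff_orderOf.mp hG) g
    have hk0 : k ≠ 0 := by
      rintro rfl
      rw [pow_zero, orderOf_eq_one_iff] at hk
      exact hg hk
    have hdiv : orderOf g / p = p ^ (k - 1) := by
      rw [hk, show p ^ k = p ^ (k-1) * p by rw [← pow_succ]; congr 1; omega,
        Nat.mul_div_cancel _ hp.pos]
    rw [hdiv, orderOf_pow, hk, Nat.gcd_eq_right (pow_dvd_pow p (by omega : k - 1 ≤ k)),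
      Nat.pow_div (by omega) hp.pos, show k - (k-1) = 1 by omega, pow_one]
  -- the map from vertices to classes
  let F : ↥{g : G | g ≠ 1} → Quotient st := fun v =>
    Quotient.mk st ⟨v.1 ^ (orderOf v.1 / p), hsoc v.1 v.2⟩
  have hFadj : ∀ u v, ((enhancedPowerGraph G).induce {g | g ≠ 1}).Adj u v → F u = F v := by
    rintro u v ⟨hne, w, hu, hv⟩
    obtain ⟨k, hk⟩ := (IsPGroup.iff_orderOf.mp hG) w
    exact Quotient.sound (aux_socle_unique hp
      ((Subgroup.zpowers_le.mpr hu) (Subgroup.npow_mem_zpowers u.1 _))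
      ((Subgroup.zpowers_le.mpr hv) (Subgroup.npow_mem_zpowers v.1 _))
      (hsoc u.1 u.2) (hsoc v.1 v.2) hk)
  have hFwalk : ∀ u v, ((enhancedPowerGraph G).induce {g | g ≠ 1}).Walk u v → F u = F v := by
    intro u v wk
    induction wk with
    | nil => rfl
    | cons h _ ih => exact (hFadj _ _ h).trans ih
  let Fbar : ((enhancedPowerGraph G).induce {g | g ≠ 1}).ConnectedComponent → Quotient st :=
    Quot.lift F (fun u v h => h.elim (fun wk => hFwalk _ _ wk))
  -- a step lemma for reachability
  have hstep : ∀ (a b : ↥{g : G | g ≠ 1}), (∃ w : G, a.1 ∈ Subgroup.zpowers w ∧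
      b.1 ∈ Subgroup.zpowers w) → ((enhancedPowerGraph G).induce {g | g ≠ 1}).Reachable a b := by
    intro a b hab
    by_cases h : a = b
    · exact h ▸ SimpleGraph.Reachable.refl a
    · exact SimpleGraph.Adj.reachable ⟨fun hh => h (Subtype.ext hh), hab⟩
  have hbij : Function.Bijective Fbar := by
    constructor
    · intro C D
      refine Quot.induction_on₂ C D ?_
      intro u v hFeq
      have hq : Subgroup.zpowers (u.1 ^ (orderOf u.1 / p)) =
          Subgroup.zpowers (v.1 ^ (orderOf v.1 / p)) := Quotient.exact hFeq
      apply SimpleGraph.ConnectedComponent.sound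
      have h1 : ((enhancedPowerGraph G).induce {g | g ≠ 1}).Reachable u
          ⟨u.1 ^ (orderOf u.1 / p), hne1 _ (hsoc u.1 u.2)⟩ :=
        hstep _ _ ⟨u.1, Subgroup.mem_zpowers u.1, Subgroup.npow_mem_zpowers u.1 _⟩
      have h2 : ((enhancedPowerGraph G).induce {g | g ≠ 1}).Reachable
          ⟨u.1 ^ (orderOf u.1 / p), hne1 _ (hsoc u.1 u.2)⟩
          ⟨v.1 ^ (orderOf v.1 / p), hne1 _ (hsoc v.1 v.2)⟩ := by
        refine hstep _ _ ⟨u.1 ^ (orderOf u.1 / p), Subgroup.mem_zpowers _, ?_⟩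
        rw [hq]
        exact Subgroup.mem_zpowers _
      have h3 : ((enhancedPowerGraph G).induce {g | g ≠ 1}).Reachable
          ⟨v.1 ^ (orderOf v.1 / p), hne1 _ (hsoc v.1 v.2)⟩ v :=
        hstep _ _ ⟨v.1, Subgroup.npow_mem_zpowers v.1 _, Subgroup.mem_zpowers v.1⟩
      exact (h1.trans h2).trans h3
    · refine Quotient.ind ?_
      intro h
      refine ⟨((enhancedPowerGraph G).induce {g | g ≠ 1}).connectedComponentMk
        ⟨h.1, hne1 h.1 h.2⟩, ?_⟩
      have heq : h.1 ^ (orderOf h.1 / p) = h.1 := by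
        rw [h.2, Nat.div_self hp.pos, pow_one]
      apply Quotient.sound
      show Subgroup.zpowers (h.1 ^ (orderOf h.1 / p)) = Subgroup.zpowers h.1
      rw [heq]
  have hcard1 : Nat.card ((enhancedPowerGraph G).induce {g | g ≠ 1}).ConnectedComponent =
      Nat.card (Quotient st) := Nat.card_eq_of_bijective Fbar hbij
  -- fiber cardinality
  have hfib : ∀ q : Quotient st, Nat.card {a : {h : G // orderOf h = p} //
      Quotient.mk st a = q} = p - 1 := by
    refine Quotient.ind ?_
    intro h
    have hord : ∀ x : G, x ∈ Subgroup.zpowers h.1 → x ≠ 1 → orderOf x = p := by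
      intro x hx hx1
      have hdvd : orderOf x ∣ p := h.2 ▸ orderOf_dvd_of_mem_zpowers hx
      rcases (Nat.dvd_prime hp).mp hdvd with h1 | h1
      · exact absurd (orderOf_eq_one_iff.mp h1) hx1
      · exact h1
    have e1 : {a : {h : G // orderOf h = p} // Quotient.mk st a = Quotient.mk st h} ≃
        {x : G // x ∈ Subgroup.zpowers h.1 ∧ x ≠ 1} :=
      { toFun := fun a => ⟨a.1.1, by
          have hr : Subgroup.zpowers a.1.1 = Subgroup.zpowers h.1 := Quotient.exact a.2
          exact ⟨hr ▸ Subgroup.mem_zpowers a.1.1, hne1 a.1.1 a.1.2⟩⟩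
        invFun := fun x => ⟨⟨x.1, hord x.1 x.2.1 x.2.2⟩, Quotient.sound
          (aux_zpowers_eq x.2.1 ((hord x.1 x.2.1 x.2.2).trans h.2.symm))⟩
        left_inv := fun a => Subtype.ext (Subtype.ext rfl)
        right_inv := fun x => Subtype.ext rfl }
    rw [Nat.card_congr e1]
    have e2 : {x : G // x ∈ Subgroup.zpowers h.1 ∧ x ≠ 1} ≃
        {y : ↥(Subgroup.zpowers h.1) // y ≠ 1} :=
      ((Equiv.subtypeSubtypeEquivSubtypeInter _ _).symm.trans
        (Equiv.subtypeEquivRight (fun y => not_congr ⟨fun h2 => Subtype.ext h2, fun h2 => congrArg Subtype.val h2⟩)))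
    rw [Nat.card_congr e2, aux_card_ne, Nat.card_zpowers, h.2]
  -- sigma decomposition
  have hcard2 : Nat.card {h : G // orderOf h = p} = Nat.card (Quotient st) * (p - 1) := by
    haveI : Fintype {h : G // orderOf h = p} := Fintype.ofFinite _
    haveI : Fintype (Quotient st) := Fintype.ofFinite _
    haveI : ∀ q : Quotient st, Fintype {a : {h : G // orderOf h = p} //
        Quotient.mk st a = q} := fun q => Fintype.ofFinite _
    rw [← Nat.card_congr (Equiv.sigmaFiberEquiv (Quotient.mk st))]
    rw [Nat.card_eq_fintype_card, Fintype.card_sigma]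
    have : ∀ q : Quotient st, Fintype.card {a : {h : G // orderOf h = p} //
        Quotient.mk st a = q} = p - 1 := fun q => by
      rw [← Nat.card_eq_fintype_card]; exact hfib q
    simp only [this, Finset.sum_const, smul_eq_mul, Finset.card_univ,
      Nat.card_eq_fintype_card]
  -- relating S to the p-torsion
  have hcard3 : Nat.card {x : G // x ^ p = 1} - 1 = Nat.card {h : G // orderOf h = p} := by
    have e3 : {h : G // orderOf h = p} ≃ {y : {x : G // x ^ p = 1} // y ≠ ⟨1, one_pow p⟩} := by
      refine (Equiv.subtypeEquivRight (fun x => ?_)).trans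
        ((Equiv.subtypeSubtypeEquivSubtypeInter (fun x : G => x ^ p = 1)
          (fun x => x ≠ 1)).symm.trans (Equiv.subtypeEquivRight
            (fun y => not_congr ⟨fun h2 => Subtype.ext h2, fun h2 => congrArg Subtype.val h2⟩)))
      constructor
      · intro hx
        exact ⟨by rw [← hx]; exact pow_orderOf_eq_one x, hne1 x hx⟩
      · intro hx
        exact orderOf_eq_prime hx.1 hx.2
    rw [Nat.card_congr e3, aux_card_ne]
  rw [hcard3, hcard2, hcard1]

theorem stmt_12 {p : ℕ} (hp : p.Prime) (r : ℕ) (hr : 2 ≤ r)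
    (t : Fin r → ℕ) (ht : ∀ i, 1 ≤ t i) :
    Nat.card ((enhancedPowerGraph
        ((i : Fin r) → Multiplicative (ZMod (p ^ t i)))).induce
          {g | g ≠ 1}).ConnectedComponent = (p ^ r - 1) / (p - 1) := by
  haveI : ∀ i, NeZero (p ^ t i) := fun i => ⟨pow_ne_zero _ hp.ne_zero⟩
  haveI : Finite ((i : Fin r) → Multiplicative (ZMod (p ^ t i))) := inferInstance
  have hG : IsPGroup p ((i : Fin r) → Multiplicative (ZMod (p ^ t i))) := by
    refine IsPGroup.of_card (n := ∑ i, t i) ?_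
    rw [Nat.card_pi]
    have hfac : ∀ i : Fin r, Nat.card (Multiplicative (ZMod (p ^ t i))) = p ^ t i := fun i => by
      rw [Nat.card_congr Multiplicative.toAdd, Nat.card_zmod]
    simp only [hfac]
    rw [Finset.prod_pow_eq_pow_sum]
  have htor : Nat.card {x : (i : Fin r) → Multiplicative (ZMod (p ^ t i)) // x ^ p = 1}
      = p ^ r := by
    have e1 : {x : (i : Fin r) → Multiplicative (ZMod (p ^ t i)) // x ^ p = 1} ≃
        ∀ i, {y : Multiplicative (ZMod (p ^ t i)) // y ^ p = 1} :=
      (Equiv.subtypeEquivRight (fun x => by simp [funext_iff])).trans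
        (Equiv.subtypePiEquivPi)
    rw [Nat.card_congr e1, Nat.card_pi]
    have e2 : ∀ i, Nat.card {y : Multiplicative (ZMod (p ^ t i)) // y ^ p = 1} = p := by
      intro i
      have e : {y : Multiplicative (ZMod (p ^ t i)) // y ^ p = 1} ≃
          {a : ZMod (p ^ t i) // p • a = 0} :=
        (Multiplicative.toAdd).subtypeEquiv (fun y => by
          rw [← toAdd_pow, ← toAdd_one]
          exact (Equiv.apply_eq_iff_eq Multiplicative.toAdd))
      rw [Nat.card_congr e, aux_card_torsion hp (ht i)]
    simp only [e2]
    rw [Finset.prod_const, Finset.card_univ, Fintype.card_fin]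
  have h2 := aux_main hp hG
  rw [htor] at h2
  exact (Nat.div_eq_of_eq_mul_left (by have := hp.two_le; omega) h2).symm
end

section
/- Let G = ℤ_{p^{t₁}} × ⋯ × ℤ_{p^{t_r}} × ℤ_n with r ≥ 2 and gcd(p, n) = 1. Then the number of connected components of the proper enhanced power graph G_e^{**}(G) equals (p^r − 1)/(p − 1). -/
open Subgroup

section General
variable {G : Type*} [Group G]

lemma isCyclic_zpowers_s13 (w : G) : IsCyclic (zpowers w) := by
  refine ⟨⟨w, mem_zpowers w⟩, ?_⟩
  rintro ⟨x, hx⟩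
  obtain ⟨k, rfl⟩ := mem_zpowers_iff.mp hx
  exact ⟨k, by ext; simp⟩

lemma key_cyclic [Finite G] [IsCyclic G] {p : ℕ} (hp : p.Prime) {s s' : G}
    (hs : orderOf s = p) (hs' : s' ^ p = 1) : s' ∈ zpowers s := by
  classical
  letI := Fintype.ofFinite G
  have h1 : (Finset.univ.filter fun a : G => a ^ p = 1).card ≤ p :=
    IsCyclic.card_pow_eq_one_le hp.pos
  have hZcard : (zpowers s : Set G).toFinset.card = p := by
    rw [Set.toFinset_card]
    simpa [hs] using Fintype.card_zpowers (x := s)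
  have hsub : (zpowers s : Set G).toFinset ⊆ Finset.univ.filter (fun a : G => a ^ p = 1) := by
    intro x hx
    rw [Set.mem_toFinset] at hx
    obtain ⟨k, rfl⟩ := mem_zpowers_iff.mp hx
    simp only [Finset.mem_filter, Finset.mem_univ, true_and]
    rw [← zpow_natCast, ← zpow_mul, mul_comm, zpow_mul, zpow_natCast, ← hs,
      pow_orderOf_eq_one, one_zpow]
  have heq := Finset.eq_of_subset_of_card_le hsub (by rw [hZcard]; exact h1)
  have : s' ∈ (zpowers s : Set G).toFinset := by
    rw [heq]; simp [hs']
  simpa [Set.mem_toFinset] using this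

lemma unique_p [Finite G] {p : ℕ} (hp : p.Prime) {w s s' : G}
    (hs : orderOf s = p) (hs' : orderOf s' = p)
    (h1 : s ∈ zpowers w) (h2 : s' ∈ zpowers w) : s' ∈ zpowers s := by
  haveI := _root_.isCyclic_zpowers_s13 w
  have hsH : orderOf (⟨s, h1⟩ : zpowers w) = p := by rw [Subgroup.orderOf_mk, hs]
  have hs'H : (⟨s', h2⟩ : zpowers w) ^ p = 1 := by
    ext
    simpa using hs' ▸ pow_orderOf_eq_one s'
  have := key_cyclic hp hsH hs'H
  obtain ⟨k, hk⟩ := mem_zpowers_iff.mp this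
  refine mem_zpowers_iff.mpr ⟨k, ?_⟩
  have := congrArg (Subtype.val) hk
  simpa using this

end General

namespace Stmt13Aux

abbrev A (p r : ℕ) (t : Fin r → ℕ) := (i : Fin r) → Multiplicative (ZMod (p ^ t i))
abbrev Gp (p r : ℕ) (t : Fin r → ℕ) (n : ℕ) := A p r t × Multiplicative (ZMod n)

variable {p r : ℕ} {t : Fin r → ℕ} {n : ℕ}

lemma neZero_pt (hp : p.Prime) (i : Fin r) : NeZero (p ^ t i) :=
  ⟨pow_ne_zero _ hp.ne_zero⟩

lemma pow_comp (hp : p.Prime) (a : A p r t) (i : Fin r) : (a i) ^ (p ^ t i) = 1 := by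
  haveI := neZero_pt (t := t) hp i
  have : (p ^ t i) • (Multiplicative.toAdd (a i)) = 0 := by
    rw [nsmul_eq_mul]
    rw [show ((p ^ t i : ℕ) : ZMod (p ^ t i)) = 0 from ZMod.natCast_self _]
    ring
  have h2 := congrArg Multiplicative.ofAdd this
  rw [ofAdd_nsmul, ofAdd_toAdd, ofAdd_zero] at h2
  exact h2

lemma pow_T (hp : p.Prime) (a : A p r t) : a ^ (p ^ (∑ i, t i)) = 1 := by
  funext i
  have hle : t i ≤ ∑ j, t j := Finset.single_le_sum (fun _ _ => Nat.zero_le _) (Finset.mem_univ i)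
  have : p ^ (∑ j, t j) = p ^ t i * p ^ (∑ j, t j - t i) := by
    rw [← pow_add, Nat.add_sub_cancel' hle]
  rw [Pi.pow_apply, this, pow_mul, pow_comp hp a i, one_pow, Pi.one_apply]

lemma orderOf_dvd_T (hp : p.Prime) (a : A p r t) : orderOf a ∣ p ^ (∑ i, t i) :=
  orderOf_dvd_of_pow_eq_one (pow_T hp a)

/-- the exponent `m` with `orderOf a = p ^ m` -/
noncomputable def socm (p : ℕ) {r : ℕ} {t : Fin r → ℕ} (a : A p r t) : ℕ :=
  (orderOf a).factorization p

lemma orderOf_eq_pow_socm (hp : p.Prime) (a : A p r t) : orderOf a = p ^ socm p a := by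
  obtain ⟨m, -, hm⟩ := (Nat.dvd_prime_pow hp).mp (orderOf_dvd_T hp a)
  rw [socm, hm, hp.factorization_pow, Finsupp.single_eq_same]

lemma socm_pos (hp : p.Prime) {a : A p r t} (ha : a ≠ 1) : 1 ≤ socm p a := by
  by_contra h
  have h0 : socm p a = 0 := by omega
  have := orderOf_eq_pow_socm hp a
  rw [h0, pow_zero, orderOf_eq_one_iff] at this
  exact ha this

/-- the "socle" of `a` : an element of order `p` in `⟨a⟩` (for `a ≠ 1`). -/
noncomputable def soc (p : ℕ) {r : ℕ} {t : Fin r → ℕ} (a : A p r t) : A p r t :=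
  a ^ (p ^ (socm p a - 1))

lemma soc_mem_zpowers (a : A p r t) : soc p a ∈ zpowers a :=
  (zpowers a).pow_mem (mem_zpowers a) _

lemma haveFinite (hp : p.Prime) : Finite (A p r t) := by
  haveI : ∀ i, NeZero (p ^ t i) := fun i => neZero_pt hp i
  infer_instance

lemma orderOf_soc (hp : p.Prime) {a : A p r t} (ha : a ≠ 1) : orderOf (soc p a) = p := by
  haveI := haveFinite (t := t) hp
  have hm := socm_pos hp ha
  rw [soc, orderOf_pow, orderOf_eq_pow_socm hp a,
    Nat.gcd_eq_right (pow_dvd_pow p (Nat.sub_le _ _)),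
    Nat.pow_div (Nat.sub_le _ _) hp.pos]
  rw [show socm p a - (socm p a - 1) = 1 by omega, pow_one]

lemma soc_of_orderOf_eq (hp : p.Prime) {a : A p r t} (ha : orderOf a = p) : soc p a = a := by
  have : socm p a = 1 := by
    have := orderOf_eq_pow_socm hp a
    rw [ha] at this
    have h2 : p ^ socm p a = p ^ 1 := by rw [← this, pow_one]
    exact Nat.pow_right_injective hp.two_le h2
  rw [soc, this]
  simp


lemma card_multZMod : Nat.card (Multiplicative (ZMod n)) = n := by
  rw [Nat.card_congr Multiplicative.toAdd, Nat.card_zmod]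

lemma mem_common (hp : p.Prime) (hn : 0 < n) (hcop : Nat.gcd p n = 1)
    (wa : A p r t) (c : Multiplicative (ZMod n))
    (hc : ∀ x, x ∈ zpowers c) (x : Gp p r t n) (h1 : x.1 ∈ zpowers wa) :
    x ∈ zpowers ((wa, c) : Gp p r t n) := by
  haveI : NeZero n := ⟨hn.ne'⟩
  haveI := haveFinite (t := t) hp
  -- natural-number exponents
  have hfw : IsOfFinOrder wa := isOfFinOrder_of_finite wa
  have hfc : IsOfFinOrder c := isOfFinOrder_of_finite c
  obtain ⟨k, hk⟩ := hfw.mem_powers_iff_mem_zpowers.mpr h1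
  obtain ⟨l, hl⟩ := hfc.mem_powers_iff_mem_zpowers.mpr (hc x.2)
  have hcopT : Nat.Coprime (p ^ (∑ i, t i)) n := Nat.Coprime.pow_left _ hcop
  obtain ⟨e, he1, he2⟩ := Nat.chineseRemainder hcopT k l
  have hwa : wa ^ e = wa ^ k := by
    rw [pow_eq_pow_iff_modEq]
    exact (he1.of_dvd (orderOf_dvd_of_pow_eq_one (pow_T hp wa)))
  have hc2 : c ^ e = c ^ l := by
    rw [pow_eq_pow_iff_modEq]
    refine he2.of_dvd ?_
    have := orderOf_dvd_natCard c
    rwa [card_multZMod] at this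
  have : ((wa, c) : Gp p r t n) ^ e = x := by
    refine Prod.ext ?_ ?_
    · rw [Prod.pow_fst, hwa]; exact hk
    · rw [Prod.pow_snd, hc2]; exact hl
  exact this ▸ (zpowers _).pow_mem (mem_zpowers _) e

/-- key adjacency helper: common generator on the first factor suffices. -/
lemma adj_of_padj (hp : p.Prime) (hn : 0 < n) (hcop : Nat.gcd p n = 1)
    {u v : Gp p r t n} (hne : u ≠ v) (wa : A p r t)
    (h1 : u.1 ∈ zpowers wa) (h2 : v.1 ∈ zpowers wa) :
    (enhancedPowerGraph (Gp p r t n)).Adj u v := by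
  haveI : NeZero n := ⟨hn.ne'⟩
  obtain ⟨c, hc⟩ := IsCyclic.exists_generator (α := Multiplicative (ZMod n))
  exact ⟨hne, (wa, c), mem_common hp hn hcop wa c hc u h1,
    mem_common hp hn hcop wa c hc v h2⟩


/-- the basis element of order `p` at coordinate `j` -/
noncomputable def ee (p : ℕ) {r : ℕ} (t : Fin r → ℕ) (j : Fin r) : A p r t :=
  fun i => if i = j then Multiplicative.ofAdd ((p ^ (t i - 1) : ℕ) : ZMod (p ^ t i)) else 1

lemma ee_apply_ne (j i : Fin r) (h : i ≠ j) : ee p t j i = 1 := if_neg h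

lemma ee_ne_one (hp : p.Prime) (ht : ∀ i, 1 ≤ t i) (j : Fin r) : ee p t j ≠ 1 := by
  intro h
  have hj := congrFun h j
  rw [ee, if_pos rfl, Pi.one_apply] at hj
  have h0 : ((p ^ (t j - 1) : ℕ) : ZMod (p ^ t j)) = 0 := by
    have := congrArg Multiplicative.toAdd hj
    simpa using this
  rw [ZMod.natCast_eq_zero_iff] at h0
  have := (Nat.pow_dvd_pow_iff_le_right hp.one_lt).mp h0
  have := ht j
  omega

lemma ee_pow_p (hp : p.Prime) (ht : ∀ i, 1 ≤ t i) (j : Fin r) : (ee p t j) ^ p = 1 := by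
  funext i
  rw [Pi.pow_apply, Pi.one_apply, ee]
  by_cases h : i = j
  · rw [if_pos h, ← ofAdd_nsmul, ofAdd_eq_one, nsmul_eq_mul, ← Nat.cast_mul,
      show p * p ^ (t i - 1) = p ^ t i by
        rw [← pow_succ']; congr 1; have := ht i; omega,
      ZMod.natCast_self]
  · rw [if_neg h, one_pow]

lemma orderOf_ee (hp : p.Prime) (ht : ∀ i, 1 ≤ t i) (j : Fin r) : orderOf (ee p t j) = p := by
  have hdvd := orderOf_dvd_of_pow_eq_one (ee_pow_p hp ht j)
  rcases (Nat.dvd_prime hp).mp hdvd with h | h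
  · exact absurd (orderOf_eq_one_iff.mp h) (ee_ne_one hp ht j)
  · exact h

lemma nondom_iff (hp : p.Prime) (hr : 2 ≤ r) (ht : ∀ i, 1 ≤ t i) (hn : 0 < n)
    (hcop : Nat.gcd p n = 1) (v : Gp p r t n) :
    ¬ IsDominating (enhancedPowerGraph (Gp p r t n)) v ↔ v.1 ≠ 1 := by
  haveI := haveFinite (t := t) hp
  constructor
  · -- contrapositive: v.1 = 1 → dominating
    intro hnd
    intro h1
    apply hnd
    intro u hu
    exact adj_of_padj hp hn hcop (Ne.symm hu) u.1 (h1 ▸ (zpowers u.1).one_mem) (mem_zpowers u.1)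
  · intro h1 hdom
    -- pick coordinate i₀ where soc v.1 is nontrivial
    have hsoc_ne : soc p v.1 ≠ 1 := by
      intro h
      have := orderOf_soc hp h1
      rw [h, orderOf_one] at this
      exact hp.ne_one this.symm
    obtain ⟨i₀, hi₀⟩ : ∃ i₀, soc p v.1 i₀ ≠ 1 := by
      by_contra h
      push_neg at h
      exact hsoc_ne (funext h)
    obtain ⟨j, hj⟩ : ∃ j : Fin r, j ≠ i₀ := by
      exact Fintype.exists_ne_of_one_lt_card (by rw [Fintype.card_fin]; omega) i₀
    set u : Gp p r t n := (ee p t j, 1) with hu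
    have hune : u ≠ v := by
      intro h
      have hv1 : v.1 = ee p t j := by rw [← h]
      have : soc p v.1 = ee p t j := by rw [hv1, soc_of_orderOf_eq hp (orderOf_ee hp ht j)]
      rw [this] at hi₀
      exact hi₀ (ee_apply_ne j i₀ (Ne.symm hj) ▸ rfl)
    have hadj := hdom u hune
    obtain ⟨-, w, hvw, huw⟩ := hadj
    have hv1w : v.1 ∈ zpowers w.1 := by
      obtain ⟨k, hk⟩ := mem_zpowers_iff.mp hvw
      exact mem_zpowers_iff.mpr ⟨k, congrArg Prod.fst hk⟩
    have hu1w : ee p t j ∈ zpowers w.1 := by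
      obtain ⟨k, hk⟩ := mem_zpowers_iff.mp huw
      exact mem_zpowers_iff.mpr ⟨k, congrArg Prod.fst hk⟩
    have hsocw : soc p v.1 ∈ zpowers w.1 :=
      (zpowers_le.mpr hv1w) (soc_mem_zpowers v.1)
    have := unique_p hp (orderOf_ee hp ht j) (orderOf_soc hp h1) hu1w hsocw
    obtain ⟨k, hk⟩ := mem_zpowers_iff.mp this
    apply hi₀
    rw [← hk, show (ee p t j ^ k) i₀ = (ee p t j i₀) ^ k from rfl,
      ee_apply_ne j i₀ (Ne.symm hj), one_zpow]


/-- order-p elements -/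
def S (p r : ℕ) (t : Fin r → ℕ) := {s : A p r t // orderOf s = p}

def lineSetoid (p r : ℕ) (t : Fin r → ℕ) : Setoid (S p r t) :=
  ⟨fun s s' => zpowers s.1 = zpowers s'.1, fun _ => rfl, Eq.symm, Eq.trans⟩

def Q (p r : ℕ) (t : Fin r → ℕ) := Quotient (lineSetoid p r t)

lemma zpowers_eq_of_mem {G : Type*} [Group G] [Finite G] {s s' : G}
    (hs : orderOf s = orderOf s') (h : s' ∈ zpowers s) : zpowers s' = zpowers s :=
  Subgroup.eq_of_le_of_card_ge (zpowers_le.mpr h)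
    (by rw [Nat.card_zpowers, Nat.card_zpowers, hs])

lemma quotient_mk_eq (hp : p.Prime) {s s' : S p r t} (h : s'.1 ∈ zpowers s.1) :
    (Quotient.mk (lineSetoid p r t) s) = Quotient.mk (lineSetoid p r t) s' := by
  haveI := haveFinite (t := t) hp
  exact Quotient.sound ((zpowers_eq_of_mem (s.2.trans s'.2.symm) h).symm)

/-- each line (minus identity) is in bijection with nonzero elements of `ZMod p` -/
noncomputable def fiberEquiv (hp : p.Prime) (q : Q p r t) :
    {k : ZMod p // k ≠ 0} ≃ {s : S p r t // Quotient.mk (lineSetoid p r t) s = q} := by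
  haveI := haveFinite (t := t) hp
  haveI : NeZero p := ⟨hp.ne_zero⟩
  set s₀ : S p r t := q.out with hs₀
  have hords₀ : orderOf s₀.1 = p := s₀.2
  have hordpow : ∀ k : {k : ZMod p // k ≠ 0}, orderOf (s₀.1 ^ (k.1.val)) = p := by
    intro k
    have hcop : Nat.gcd (orderOf s₀.1) k.1.val = 1 := by
      rw [hords₀]
      refine (Nat.Prime.coprime_iff_not_dvd hp).mpr fun hdvd => ?_
      have hlt : k.1.val < p := ZMod.val_lt k.1
      have := Nat.eq_zero_of_dvd_of_lt hdvd hlt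
      · exact k.2 (by rwa [← ZMod.val_eq_zero])
    rw [orderOf_pow, hcop, Nat.div_one, hords₀]
  refine Equiv.ofBijective
    (fun k => ⟨⟨s₀.1 ^ (k.1.val), hordpow k⟩,
      ((quotient_mk_eq hp ((zpowers s₀.1).pow_mem (mem_zpowers _) _)).symm).trans
        (Quotient.out_eq q)⟩) ⟨?_, ?_⟩
  · -- injective
    rintro ⟨k, hk⟩ ⟨k', hk'⟩ h
    have h2 : s₀.1 ^ k.val = s₀.1 ^ k'.val := congrArg (fun x => x.1.1) h
    have hmod := pow_eq_pow_iff_modEq.mp h2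
    rw [hords₀] at hmod
    have : k.val = k'.val := by
      have h1 : k.val < p := ZMod.val_lt k
      have h2 : k'.val < p := ZMod.val_lt k'
      unfold Nat.ModEq at hmod
      rwa [Nat.mod_eq_of_lt h1, Nat.mod_eq_of_lt h2] at hmod
    exact Subtype.ext (ZMod.val_injective p this)
  · -- surjective
    rintro ⟨⟨s, hs⟩, hclass⟩
    have hrel : zpowers s = zpowers s₀.1 :=
      Quotient.exact (hclass.trans (Quotient.out_eq q).symm)
    have hmem : s ∈ zpowers s₀.1 := hrel ▸ mem_zpowers s
    obtain ⟨j, hj⟩ := mem_zpowers_iff.mp hmem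
    have hkne : ((j : ℤ) : ZMod p) ≠ 0 := by
      intro h0
      have hdvd : ((p : ℕ) : ℤ) ∣ j := (ZMod.intCast_zmod_eq_zero_iff_dvd j p).mp h0
      rw [← hords₀] at hdvd
      have : s₀.1 ^ j = 1 := orderOf_dvd_iff_zpow_eq_one.mp hdvd
      rw [hj] at this
      rw [this, orderOf_one] at hs
      exact hp.ne_one hs.symm
    refine ⟨⟨(j : ZMod p), hkne⟩, ?_⟩
    refine Subtype.ext (Subtype.ext ?_)
    show s₀.1 ^ (((j : ℤ) : ZMod p).val) = s
    have hv : ((((j : ℤ) : ZMod p).val : ℤ)) = j % p := ZMod.val_intCast j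
    calc s₀.1 ^ (((j : ℤ) : ZMod p).val)
        = s₀.1 ^ ((((j : ℤ) : ZMod p).val : ℤ)) := (zpow_natCast _ _).symm
      _ = s₀.1 ^ (j % (p : ℤ)) := by rw [hv]
      _ = s₀.1 ^ j := by
          have := zpow_mod_orderOf s₀.1 j
          rwa [hords₀] at this
      _ = s := hj

lemma card_proot (hp : p.Prime) {T : ℕ} (hT : 1 ≤ T) :
    Nat.card {x : Multiplicative (ZMod (p ^ T)) // x ^ p = 1} = p := by
  haveI : NeZero (p ^ T) := ⟨pow_ne_zero _ hp.ne_zero⟩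
  haveI : NeZero p := ⟨hp.ne_zero⟩
  have hmul : p * p ^ (T - 1) = p ^ T := by
    rw [← pow_succ']; congr 1; omega
  have hppos : 0 < p ^ (T - 1) := Nat.pow_pos hp.pos
  have key : Function.Bijective (fun k : ZMod p =>
      (⟨Multiplicative.ofAdd ((k.val * p ^ (T - 1) : ℕ) : ZMod (p ^ T)), by
        rw [← ofAdd_nsmul, ofAdd_eq_one, nsmul_eq_mul, ← Nat.cast_mul,
          show p * (k.val * p ^ (T - 1)) = k.val * p ^ T by
            rw [← hmul]; ring,
          Nat.cast_mul, ZMod.natCast_self, mul_zero]⟩ :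
        {x : Multiplicative (ZMod (p ^ T)) // x ^ p = 1})) := by
    constructor
    · intro k k' h
      have h2 : ((k.val * p ^ (T - 1) : ℕ) : ZMod (p ^ T)) =
          ((k'.val * p ^ (T - 1) : ℕ) : ZMod (p ^ T)) := by
        have := congrArg (fun x => Multiplicative.toAdd x.1) h
        simpa using this
      have hlt : ∀ m : ZMod p, m.val * p ^ (T - 1) < p ^ T := by
        intro m
        calc m.val * p ^ (T - 1) < p * p ^ (T - 1) :=
              Nat.mul_lt_mul_of_lt_of_le (ZMod.val_lt m) le_rfl hppos
          _ = p ^ T := hmul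
      have h3 : k.val * p ^ (T - 1) = k'.val * p ^ (T - 1) := by
        have e1 := ZMod.val_cast_of_lt (hlt k)
        have e2 := ZMod.val_cast_of_lt (hlt k')
        rw [← e1, ← e2, h2]
      exact ZMod.val_injective p (Nat.eq_of_mul_eq_mul_right hppos h3)
    · rintro ⟨x, hx⟩
      set a := Multiplicative.toAdd x with ha
      have hxa : p • a = 0 := by
        have := congrArg Multiplicative.toAdd hx
        simpa [← ha, toAdd_pow] using this
      have hdvd : p ^ T ∣ p * a.val := by
        rw [← ZMod.natCast_eq_zero_iff, Nat.cast_mul]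
        rw [nsmul_eq_mul] at hxa
        rwa [ZMod.natCast_val, ZMod.cast_id]
      have hdvd2 : p ^ (T - 1) ∣ a.val := by
        have : p * p ^ (T - 1) ∣ p * a.val := by rw [hmul]; exact hdvd
        exact (mul_dvd_mul_iff_left (by exact_mod_cast hp.ne_zero : (p : ℕ) ≠ 0)).mp this
      have hq : a.val / p ^ (T - 1) < p := by
        rw [Nat.div_lt_iff_lt_mul hppos]
        calc a.val < p ^ T := ZMod.val_lt a
          _ = p * p ^ (T - 1) := hmul.symm
      refine ⟨((a.val / p ^ (T - 1) : ℕ) : ZMod p), ?_⟩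
      refine Subtype.ext ?_
      show Multiplicative.ofAdd _ = x
      rw [ZMod.val_cast_of_lt hq, Nat.div_mul_cancel hdvd2]
      have : ((a.val : ℕ) : ZMod (p ^ T)) = a := ZMod.natCast_rightInverse a
      rw [this, ha, ofAdd_toAdd]
  rw [Nat.card_congr (Equiv.ofBijective _ key).symm, Nat.card_zmod]

lemma pow_p_eq_one_iff (a : A p r t) : a ^ p = 1 ↔ ∀ i, (a i) ^ p = 1 := by
  constructor
  · intro h i
    exact congrFun h i
  · intro h
    funext i
    exact h i

lemma card_T (hp : p.Prime) (ht : ∀ i, 1 ≤ t i) :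
    Nat.card {a : A p r t // ∀ i, (a i) ^ p = 1} = p ^ r := by
  haveI : ∀ i, NeZero (p ^ t i) := fun i => neZero_pt hp i
  rw [Nat.card_congr (Equiv.subtypePiEquivPi (p := fun i (x : Multiplicative (ZMod (p ^ t i))) => x ^ p = 1)),
    Nat.card_pi]
  have : ∀ i : Fin r, Nat.card {x : Multiplicative (ZMod (p ^ t i)) // x ^ p = 1} = p :=
    fun i => card_proot hp (ht i)
  rw [Finset.prod_congr rfl (fun i _ => this i), Finset.prod_const, Finset.card_univ,
    Fintype.card_fin]

/-- S is the set of elements of `T` different from the identity -/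
lemma card_S (hp : p.Prime) (ht : ∀ i, 1 ≤ t i) : Nat.card (S p r t) = p ^ r - 1 := by
  classical
  haveI := haveFinite (t := t) hp
  set T := {a : A p r t // ∀ i, (a i) ^ p = 1} with hT
  have hone : ∀ i : Fin r, ((1 : A p r t) i) ^ p = 1 := fun i => one_pow p
  set o : T := ⟨1, hone⟩ with ho
  have e1 : S p r t ≃ {x : T // x ≠ o} := by
    refine ⟨fun s => ⟨⟨s.1, fun i => ?_⟩, ?_⟩, fun x => ⟨x.1.1, ?_⟩, fun s => rfl, fun x => rfl⟩
    · have hsp := pow_orderOf_eq_one s.1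
      rw [s.2] at hsp
      exact congrFun hsp i
    · intro h
      have h1 : s.1 = 1 := congrArg (fun y => y.1) h
      have h2 := s.2
      rw [h1, orderOf_one] at h2
      exact hp.ne_one h2.symm
    · have hne : x.1.1 ≠ 1 := fun h => x.2 (Subtype.ext h)
      have hdvd : orderOf x.1.1 ∣ p :=
        orderOf_dvd_of_pow_eq_one (funext fun i => by
          rw [Pi.pow_apply, x.1.2 i, Pi.one_apply])
      rcases (Nat.dvd_prime hp).mp hdvd with h | h
      · exact absurd (orderOf_eq_one_iff.mp h) hne
      · exact h
  have e2 : Option {x : T // x ≠ o} ≃ T := Equiv.optionSubtypeNe o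
  have : Nat.card T = Nat.card {x : T // x ≠ o} + 1 := by
    rw [← Nat.card_congr e2, Finite.card_option]
  rw [Nat.card_congr e1, card_T hp ht] at *
  omega

lemma card_units_zmod (hp : p.Prime) : Nat.card {k : ZMod p // k ≠ 0} = p - 1 := by
  classical
  haveI : NeZero p := ⟨hp.ne_zero⟩
  have e2 : Option {k : ZMod p // k ≠ 0} ≃ ZMod p := Equiv.optionSubtypeNe 0
  have : Nat.card (ZMod p) = Nat.card {k : ZMod p // k ≠ 0} + 1 := by
    rw [← Nat.card_congr e2, Finite.card_option]
  rw [Nat.card_zmod] at this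
  omega

lemma card_Q (hp : p.Prime) (ht : ∀ i, 1 ≤ t i) :
    Nat.card (Q p r t) = (p ^ r - 1) / (p - 1) := by
  haveI := haveFinite (t := t) hp
  have key : Nat.card (S p r t) = Nat.card (Q p r t) * (p - 1) := by
    have e : S p r t ≃ (Q p r t) × {k : ZMod p // k ≠ 0} :=
      ((Equiv.sigmaFiberEquiv (Quotient.mk (lineSetoid p r t))).symm.trans
        ((Equiv.sigmaCongrRight (fun q => (fiberEquiv hp q).symm)).trans
          (Equiv.sigmaEquivProd _ _)))
    rw [Nat.card_congr e, Nat.card_prod, card_units_zmod hp]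
  rw [card_S hp ht] at key
  rw [key, Nat.mul_div_cancel _ (by have := hp.two_le; omega)]


section Graph

variable (p r t n)

abbrev Γ : SimpleGraph (Gp p r t n) := enhancedPowerGraph (Gp p r t n)

abbrev nds : Set (Gp p r t n) := {v | ¬ IsDominating (Γ p r t n) v}

abbrev Γ' : SimpleGraph (nds p r t n) := (Γ p r t n).induce (nds p r t n)

variable {p r t n}

lemma ne_one_of_mem (hp : p.Prime) (hr : 2 ≤ r) (ht : ∀ i, 1 ≤ t i) (hn : 0 < n)
    (hcop : Nat.gcd p n = 1) (v : nds p r t n) : (v : Gp p r t n).1 ≠ 1 :=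
  (nondom_iff hp hr ht hn hcop _).mp v.2

lemma s_ne_one (hp : p.Prime) (s : S p r t) : s.1 ≠ 1 := by
  intro h
  have h2 := s.2
  rw [h, orderOf_one] at h2
  exact hp.ne_one h2.symm

/-- the vertex of the proper graph attached to an order-p element -/
def vtx (hp : p.Prime) (hr : 2 ≤ r) (ht : ∀ i, 1 ≤ t i) (hn : 0 < n)
    (hcop : Nat.gcd p n = 1) (s : S p r t) : nds p r t n :=
  ⟨(s.1, 1), by
    rw [Set.mem_setOf_eq, nondom_iff hp hr ht hn hcop]
    exact s_ne_one hp s⟩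

/-- the invariant map on vertices -/
noncomputable def Fv (hp : p.Prime) (hr : 2 ≤ r) (ht : ∀ i, 1 ≤ t i) (hn : 0 < n)
    (hcop : Nat.gcd p n = 1) (v : nds p r t n) : Q p r t :=
  Quotient.mk (lineSetoid p r t)
    ⟨soc p (v : Gp p r t n).1, orderOf_soc hp (ne_one_of_mem hp hr ht hn hcop v)⟩

lemma Fv_adj (hp : p.Prime) (hr : 2 ≤ r) (ht : ∀ i, 1 ≤ t i) (hn : 0 < n)
    (hcop : Nat.gcd p n = 1) {u v : nds p r t n} (h : (Γ' p r t n).Adj u v) :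
    Fv hp hr ht hn hcop u = Fv hp hr ht hn hcop v := by
  haveI := haveFinite (t := t) hp
  obtain ⟨-, w, hu, hv⟩ := h
  have hu1 : (u : Gp p r t n).1 ∈ zpowers w.1 := by
    obtain ⟨k, hk⟩ := mem_zpowers_iff.mp hu
    exact mem_zpowers_iff.mpr ⟨k, congrArg Prod.fst hk⟩
  have hv1 : (v : Gp p r t n).1 ∈ zpowers w.1 := by
    obtain ⟨k, hk⟩ := mem_zpowers_iff.mp hv
    exact mem_zpowers_iff.mpr ⟨k, congrArg Prod.fst hk⟩
  have hsu : soc p (u : Gp p r t n).1 ∈ zpowers w.1 :=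
    zpowers_le.mpr hu1 (soc_mem_zpowers _)
  have hsv : soc p (v : Gp p r t n).1 ∈ zpowers w.1 :=
    zpowers_le.mpr hv1 (soc_mem_zpowers _)
  exact quotient_mk_eq hp
    (unique_p hp (orderOf_soc hp (ne_one_of_mem hp hr ht hn hcop u))
      (orderOf_soc hp (ne_one_of_mem hp hr ht hn hcop v)) hsu hsv)

lemma Fv_walk (hp : p.Prime) (hr : 2 ≤ r) (ht : ∀ i, 1 ≤ t i) (hn : 0 < n)
    (hcop : Nat.gcd p n = 1) {u v : nds p r t n} (w : (Γ' p r t n).Walk u v) :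
    Fv hp hr ht hn hcop u = Fv hp hr ht hn hcop v := by
  induction w with
  | nil => rfl
  | cons h _ ih => exact (Fv_adj hp hr ht hn hcop h).trans ih

noncomputable def toQ (hp : p.Prime) (hr : 2 ≤ r) (ht : ∀ i, 1 ≤ t i) (hn : 0 < n)
    (hcop : Nat.gcd p n = 1) : (Γ' p r t n).ConnectedComponent → Q p r t :=
  SimpleGraph.ConnectedComponent.lift (Fv hp hr ht hn hcop)
    (fun _ _ w _ => Fv_walk hp hr ht hn hcop w)

lemma vtx_reach (hp : p.Prime) (hr : 2 ≤ r) (ht : ∀ i, 1 ≤ t i) (hn : 0 < n)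
    (hcop : Nat.gcd p n = 1) {s : S p r t} {v : nds p r t n}
    (h : s.1 ∈ zpowers (v : Gp p r t n).1) :
    (Γ' p r t n).Reachable (vtx hp hr ht hn hcop s) v := by
  by_cases he : vtx hp hr ht hn hcop s = v
  · exact he ▸ SimpleGraph.Reachable.refl _
  · refine SimpleGraph.Adj.reachable ?_
    have hne : ((vtx hp hr ht hn hcop s : nds p r t n) : Gp p r t n) ≠ (v : Gp p r t n) :=
      fun hh => he (Subtype.ext hh)
    exact adj_of_padj hp hn hcop hne (v : Gp p r t n).1 h (mem_zpowers _)

noncomputable def fromQ (hp : p.Prime) (hr : 2 ≤ r) (ht : ∀ i, 1 ≤ t i) (hn : 0 < n)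
    (hcop : Nat.gcd p n = 1) : Q p r t → (Γ' p r t n).ConnectedComponent :=
  Quotient.lift (fun s => (Γ' p r t n).connectedComponentMk (vtx hp hr ht hn hcop s))
    (by
      intro s s' hrel
      have hmem : s'.1 ∈ zpowers s.1 := by
        have : zpowers s.1 = zpowers s'.1 := hrel
        exact this ▸ mem_zpowers s'.1
      have hmem' : s'.1 ∈ zpowers ((vtx hp hr ht hn hcop s : nds p r t n) : Gp p r t n).1 := hmem
      exact (SimpleGraph.ConnectedComponent.sound
        (vtx_reach hp hr ht hn hcop (v := vtx hp hr ht hn hcop s) hmem')).symm)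

lemma left_inv (hp : p.Prime) (hr : 2 ≤ r) (ht : ∀ i, 1 ≤ t i) (hn : 0 < n)
    (hcop : Nat.gcd p n = 1) (c : (Γ' p r t n).ConnectedComponent) :
    fromQ hp hr ht hn hcop (toQ hp hr ht hn hcop c) = c := by
  refine SimpleGraph.ConnectedComponent.ind (fun v => ?_) c
  show fromQ hp hr ht hn hcop (Fv hp hr ht hn hcop v) = _
  refine SimpleGraph.ConnectedComponent.sound ?_
  exact vtx_reach hp hr ht hn hcop (soc_mem_zpowers _)

lemma right_inv (hp : p.Prime) (hr : 2 ≤ r) (ht : ∀ i, 1 ≤ t i) (hn : 0 < n)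
    (hcop : Nat.gcd p n = 1) (q : Q p r t) :
    toQ hp hr ht hn hcop (fromQ (n := n) hp hr ht hn hcop q) = q := by
  refine Quotient.inductionOn q (fun s => ?_)
  show Fv hp hr ht hn hcop (vtx hp hr ht hn hcop s) = _
  unfold Fv
  congr 1
  exact Subtype.ext (soc_of_orderOf_eq hp s.2)

lemma components_card (hp : p.Prime) (hr : 2 ≤ r) (ht : ∀ i, 1 ≤ t i) (hn : 0 < n)
    (hcop : Nat.gcd p n = 1) :
    Nat.card (Γ' p r t n).ConnectedComponent = (p ^ r - 1) / (p - 1) := by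
  rw [Nat.card_congr ⟨toQ hp hr ht hn hcop, fromQ hp hr ht hn hcop,
    left_inv hp hr ht hn hcop, right_inv hp hr ht hn hcop⟩]
  exact card_Q hp ht

end Graph
end Stmt13Aux

theorem stmt_13 {p : ℕ} (hp : p.Prime) (r : ℕ) (hr : 2 ≤ r)
    (t : Fin r → ℕ) (ht : ∀ i, 1 ≤ t i)
    (n : ℕ) (hn : 0 < n) (hcop : Nat.gcd p n = 1) :
    Nat.card ((enhancedPowerGraph
        (((i : Fin r) → Multiplicative (ZMod (p ^ t i))) × Multiplicative (ZMod n))).induce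
          {v | ¬ IsDominating (enhancedPowerGraph
            (((i : Fin r) → Multiplicative (ZMod (p ^ t i))) × Multiplicative (ZMod n))) v}
        ).ConnectedComponent = (p ^ r - 1) / (p - 1) :=
  Stmt13Aux.components_card hp hr ht hn hcop
end
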